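/- arXiv:2603.11204 — 5 statements merged into one kernel-verified Lean document; each statement's English description precedes it below -/
import Mathlib

section
/- Let d ≥ 1 and let Φ : M_d(ℂ) → M_d(ℂ) be a linear map which is KS-decomposable: Φ = λ·Φ₁ + (1−λ)·Φ₂ for some λ ∈ [0,1], where Φ₁ is a unital Kadison–Schwarz operator and Φ₂ is a unital co-Kadison–Schwarz operator. Then for every X ∈ M_d(ℂ), Φ(X* ∘ X) − Φ(X)* ∘ Φ(X) ≥ λ(1−λ)·(Φ₁(X) − Φ₂(X))* ∘ (Φ₁(X) − Φ₂(X)), where A ∘ B := AB + BA is the Jordan product (so in particular X* ∘ X = X*X + XX*). -/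
open scoped ComplexOrder
open Matrix

noncomputable section

/-- Blockwise amplification `id_k ⊗ Φ` of a map `Φ` on `d × d` complex matrices,
acting on `M_k(M_d(ℂ))` (identified with `(k*d) × (k*d)` matrices indexed by `Fin k × Fin d`). -/
def amp (k : ℕ) {d : ℕ}
    (Φ : Matrix (Fin d) (Fin d) ℂ → Matrix (Fin d) (Fin d) ℂ)
    (X : Matrix (Fin k × Fin d) (Fin k × Fin d) ℂ) :
    Matrix (Fin k × Fin d) (Fin k × Fin d) ℂ :=
  Matrix.of fun p q => Φ (Matrix.of fun i j => X (p.1, i) (q.1, j)) p.2 q.2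

/-- The completely depolarizing map `Δ(X) = (Tr X / d) • I_d`. -/
def Delta (d : ℕ) (X : Matrix (Fin d) (Fin d) ℂ) : Matrix (Fin d) (Fin d) ℂ :=
  (Matrix.trace X / (d : ℂ)) • (1 : Matrix (Fin d) (Fin d) ℂ)

/-- A positive real scalar multiple of a PSD matrix is PSD. -/
lemma psd_smul {n : ℕ} {M : Matrix (Fin n) (Fin n) ℂ} (hM : M.PosSemidef)
    {c : ℝ} (hc : 0 ≤ c) : ((c : ℂ) • M).PosSemidef := by
  constructor
  · unfold Matrix.IsHermitian
    rw [conjTranspose_smul, hM.1.eq, Complex.star_def, Complex.conj_ofReal]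
  · intro x
    exact (hM.smul (a := (c : ℂ)) (by exact_mod_cast hc)).2 x

/-- A unital linear map sending matrices of the form `YᴴY` to Hermitian matrices is
star-preserving. -/
lemma star_pres {n : ℕ} (Φ : Matrix (Fin n) (Fin n) ℂ →ₗ[ℂ] Matrix (Fin n) (Fin n) ℂ)
    (hu : Φ 1 = 1)
    (hh : ∀ Y : Matrix (Fin n) (Fin n) ℂ, (Φ (Yᴴ * Y))ᴴ = Φ (Yᴴ * Y)) :
    ∀ X : Matrix (Fin n) (Fin n) ℂ, Φ Xᴴ = (Φ X)ᴴ := by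
  have herm : ∀ H : Matrix (Fin n) (Fin n) ℂ, Hᴴ = H → (Φ H)ᴴ = Φ H := by
    intro H hH
    have key : (2 : ℂ) • H = (H + 1)ᴴ * (H + 1) - Hᴴ * H - 1 := by
      rw [conjTranspose_add, hH, conjTranspose_one, two_smul]
      noncomm_ring
    have h2 : (2 : ℂ) • Φ H = Φ ((H + 1)ᴴ * (H + 1)) - Φ (Hᴴ * H) - 1 := by
      rw [← Φ.map_smul, key, map_sub, map_sub, hu]
    have h3 : ((2 : ℂ) • Φ H)ᴴ = (2 : ℂ) • Φ H := by
      rw [h2, conjTranspose_sub, conjTranspose_sub, hh, hh, conjTranspose_one]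
    rw [conjTranspose_smul] at h3
    have hs : star (2 : ℂ) = 2 := by norm_num
    rw [hs] at h3
    exact smul_right_injective (Matrix (Fin n) (Fin n) ℂ) (two_ne_zero (α := ℂ)) h3
  intro X
  set H := Xᴴ + X with hHdef
  set K := Complex.I • (Xᴴ - X) with hKdef
  have hH : Hᴴ = H := by simp [hHdef, add_comm]
  have hK : Kᴴ = K := by
    rw [hKdef, conjTranspose_smul, conjTranspose_sub, conjTranspose_conjTranspose,
      Complex.star_def, Complex.conj_I]
    module
  have hXstar : (2 : ℂ) • Xᴴ = H - Complex.I • K := by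
    rw [hHdef, hKdef, smul_smul, Complex.I_mul_I]
    module
  have hX : (2 : ℂ) • X = H + Complex.I • K := by
    rw [hHdef, hKdef, smul_smul, Complex.I_mul_I]
    module
  have e1 : (2 : ℂ) • Φ Xᴴ = Φ H - Complex.I • Φ K := by
    rw [← Φ.map_smul, hXstar, map_sub, Φ.map_smul]
  have e2 : (2 : ℂ) • (Φ X)ᴴ = Φ H - Complex.I • Φ K := by
    have h4 : (2 : ℂ) • Φ X = Φ H + Complex.I • Φ K := by
      rw [← Φ.map_smul, hX, map_add, Φ.map_smul]
    have h5 := congrArg conjTranspose h4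
    rw [conjTranspose_smul, conjTranspose_add, conjTranspose_smul,
      herm H hH, herm K hK, Complex.star_def, Complex.conj_I,
      map_ofNat (starRingEnd ℂ) 2] at h5
    rw [h5]
    module
  exact smul_right_injective (Matrix (Fin n) (Fin n) ℂ) (two_ne_zero (α := ℂ)) (e1.trans e2.symm)

/-- The key algebraic identity behind KS-decomposability. -/
lemma key_id {n : ℕ} (A A' B B' P₁ Q₁ P₂ Q₂ : Matrix (Fin n) (Fin n) ℂ) (c : ℂ) :
    (c • (P₁ + Q₁) + (1 - c) • (P₂ + Q₂))
      - ((c • A' + (1 - c) • B') * (c • A + (1 - c) • B)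
          + (c • A + (1 - c) • B) * (c • A' + (1 - c) • B'))
      - (c * (1 - c)) • ((A' - B') * (A - B) + (A - B) * (A' - B'))
    = c • ((P₁ - A' * A) + (Q₁ - A * A')) + (1 - c) • ((P₂ - B * B') + (Q₂ - B' * B)) := by
  simp only [mul_add, add_mul, sub_mul, mul_sub, smul_mul_assoc, mul_smul_comm, smul_smul,
    smul_add, smul_sub]
  module

theorem stmt4 (d : ℕ) (hd : 1 ≤ d)
    (Φ Φ₁ Φ₂ : Matrix (Fin d) (Fin d) ℂ →ₗ[ℂ] Matrix (Fin d) (Fin d) ℂ)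
    (l : ℝ) (hl0 : 0 ≤ l) (hl1 : l ≤ 1)
    (hdec : ∀ X, Φ X = (l : ℂ) • Φ₁ X + ((1 : ℂ) - (l : ℂ)) • Φ₂ X)
    (h1u : Φ₁ 1 = 1) (h2u : Φ₂ 1 = 1)
    (h1KS : ∀ X : Matrix (Fin d) (Fin d) ℂ,
      (Φ₁ (Xᴴ * X) - (Φ₁ X)ᴴ * Φ₁ X).PosSemidef)
    (h2coKS : ∀ X : Matrix (Fin d) (Fin d) ℂ,
      (Φ₂ (Xᴴ * X) - Φ₂ X * (Φ₂ X)ᴴ).PosSemidef) :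
    ∀ X : Matrix (Fin d) (Fin d) ℂ,
      (Φ (Xᴴ * X + X * Xᴴ) - ((Φ X)ᴴ * Φ X + Φ X * (Φ X)ᴴ)
        - ((l : ℂ) * ((1 : ℂ) - (l : ℂ))) •
            ((Φ₁ X - Φ₂ X)ᴴ * (Φ₁ X - Φ₂ X)
              + (Φ₁ X - Φ₂ X) * (Φ₁ X - Φ₂ X)ᴴ)).PosSemidef := by
  -- Φ₁ and Φ₂ are star-preserving
  have hh1 : ∀ Y : Matrix (Fin d) (Fin d) ℂ, (Φ₁ (Yᴴ * Y))ᴴ = Φ₁ (Yᴴ * Y) := by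
    intro Y
    have h := (h1KS Y).1
    unfold Matrix.IsHermitian at h
    rw [conjTranspose_sub, conjTranspose_mul, conjTranspose_conjTranspose] at h
    exact sub_left_inj.mp h
  have hh2 : ∀ Y : Matrix (Fin d) (Fin d) ℂ, (Φ₂ (Yᴴ * Y))ᴴ = Φ₂ (Yᴴ * Y) := by
    intro Y
    have h := (h2coKS Y).1
    unfold Matrix.IsHermitian at h
    rw [conjTranspose_sub, conjTranspose_mul, conjTranspose_conjTranspose] at h
    exact sub_left_inj.mp h
  have hs1 := star_pres Φ₁ h1u hh1
  have hs2 := star_pres Φ₂ h2u hh2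
  intro X
  set A := Φ₁ X with hA
  set B := Φ₂ X with hB
  -- the four PSD building blocks
  have S₁ : (Φ₁ (Xᴴ * X) - Aᴴ * A).PosSemidef := h1KS X
  have S₂ : (Φ₁ (X * Xᴴ) - A * Aᴴ).PosSemidef := by
    have h := h1KS Xᴴ
    rwa [conjTranspose_conjTranspose, hs1 X, conjTranspose_conjTranspose] at h
  have T₁ : (Φ₂ (Xᴴ * X) - B * Bᴴ).PosSemidef := h2coKS X
  have T₂ : (Φ₂ (X * Xᴴ) - Bᴴ * B).PosSemidef := by
    have h := h2coKS Xᴴ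
    rwa [conjTranspose_conjTranspose, hs2 X, conjTranspose_conjTranspose] at h
  -- rewrite the target as a convex combination of PSD matrices
  have target_eq :
      Φ (Xᴴ * X + X * Xᴴ) - ((Φ X)ᴴ * Φ X + Φ X * (Φ X)ᴴ)
        - ((l : ℂ) * ((1 : ℂ) - (l : ℂ))) •
            ((Φ₁ X - Φ₂ X)ᴴ * (Φ₁ X - Φ₂ X)
              + (Φ₁ X - Φ₂ X) * (Φ₁ X - Φ₂ X)ᴴ)
      = (l : ℂ) • ((Φ₁ (Xᴴ * X) - Aᴴ * A) + (Φ₁ (X * Xᴴ) - A * Aᴴ))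
        + ((1 : ℂ) - (l : ℂ)) • ((Φ₂ (Xᴴ * X) - B * Bᴴ) + (Φ₂ (X * Xᴴ) - Bᴴ * B)) := by
    have hconj : (Φ X)ᴴ = (l : ℂ) • Aᴴ + ((1 : ℂ) - (l : ℂ)) • Bᴴ := by
      rw [hdec X, conjTranspose_add, conjTranspose_smul, conjTranspose_smul, ← hA, ← hB]
      simp only [Complex.star_def, map_sub, _root_.map_one, Complex.conj_ofReal]
    have hmap : Φ (Xᴴ * X + X * Xᴴ)
        = (l : ℂ) • (Φ₁ (Xᴴ * X) + Φ₁ (X * Xᴴ))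
          + ((1 : ℂ) - (l : ℂ)) • (Φ₂ (Xᴴ * X) + Φ₂ (X * Xᴴ)) := by
      rw [hdec (Xᴴ * X + X * Xᴴ), map_add, map_add]
    have hD : (Φ₁ X - Φ₂ X)ᴴ = Aᴴ - Bᴴ := by
      rw [conjTranspose_sub, hA, hB]
    rw [hmap, hconj, hdec X, ← hA, ← hB, hD]
    exact key_id A Aᴴ B Bᴴ (Φ₁ (Xᴴ * X)) (Φ₁ (X * Xᴴ)) (Φ₂ (Xᴴ * X)) (Φ₂ (X * Xᴴ)) (l : ℂ)
  rw [target_eq]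
  have hcast : ((1 : ℂ) - (l : ℂ)) = ((1 - l : ℝ) : ℂ) := by push_cast; ring
  rw [hcast]
  exact (psd_smul (S₁.add S₂) hl0).add (psd_smul (T₁.add T₂) (by linarith))

end
end

section
/- Let d ≥ 2 and let a ∈ [0,1]. Define R_a : M_d(ℂ) → M_d(ℂ) by R_a(X) = (1/(d−a))·(Tr(X)·I_d − a·X). Then R_a is KS-decomposable: there exist λ ∈ [0,1], a unital Kadison–Schwarz operator Φ₁, and a unital co-Kadison–Schwarz operator Φ₂ with R_a = λΦ₁ + (1−λ)Φ₂. -/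
open scoped ComplexOrder
open Matrix
open Complex

noncomputable section

/-- Cauchy–Schwarz for finite families of complex numbers, normSq form. -/
lemma aux_csq {ι : Type*} [Fintype ι] (u w : ι → ℂ) :
    Complex.normSq (∑ i, (starRingEnd ℂ) (u i) * w i)
      ≤ (∑ i, Complex.normSq (u i)) * (∑ i, Complex.normSq (w i)) := by
  set u' : EuclideanSpace ℂ ι := WithLp.toLp 2 u with hu'
  set w' : EuclideanSpace ℂ ι := WithLp.toLp 2 w with hw'
  have h := norm_inner_le_norm (𝕜 := ℂ) u' w'
  have hin : (inner ℂ u' w' : ℂ) = ∑ i, (starRingEnd ℂ) (u i) * w i := by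
    simp [PiLp.inner_apply, RCLike.inner_apply, hu', hw', mul_comm]
  have hnu : ‖u'‖ ^ 2 = ∑ i, Complex.normSq (u i) := by
    rw [EuclideanSpace.norm_eq, Real.sq_sqrt (by positivity)]
    simp [Complex.sq_norm, hu']
  have hnw : ‖w'‖ ^ 2 = ∑ i, Complex.normSq (w i) := by
    rw [EuclideanSpace.norm_eq, Real.sq_sqrt (by positivity)]
    simp [Complex.sq_norm, hw']
  calc Complex.normSq (∑ i, (starRingEnd ℂ) (u i) * w i)
      = ‖(inner ℂ u' w' : ℂ)‖ ^ 2 := by rw [hin, Complex.sq_norm]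
    _ ≤ (‖u'‖ * ‖w'‖) ^ 2 := by apply pow_le_pow_left₀ (norm_nonneg _) h
    _ = _ := by rw [mul_pow, hnu, hnw]

section helpers
variable {n : Type*} [Fintype n] [DecidableEq n]

omit [DecidableEq n] in
lemma aux_mul_vmv (A : Matrix n n ℂ) (u v : n → ℂ) :
    A * vecMulVec u v = vecMulVec (A *ᵥ u) v := by
  ext i j
  simp [Matrix.mul_apply, vecMulVec_apply, Matrix.mulVec, dotProduct,
    Finset.sum_mul, mul_assoc]

omit [DecidableEq n] in
lemma aux_vmv_mul (u v : n → ℂ) (A : Matrix n n ℂ) :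
    vecMulVec u v * A = vecMulVec u (v ᵥ* A) := by
  ext i j
  simp [Matrix.mul_apply, vecMulVec_apply, Matrix.vecMul, dotProduct,
    Finset.mul_sum, mul_assoc]

omit [DecidableEq n] in
lemma aux_trace_vmv (u v : n → ℂ) : trace (vecMulVec u v) = v ⬝ᵥ u := by
  simp [Matrix.trace, Matrix.diag, vecMulVec_apply, dotProduct, mul_comm]

omit [DecidableEq n] in
lemma aux_vmv_vmv (u v u' v' : n → ℂ) :
    vecMulVec u v * vecMulVec u' v' = (v ⬝ᵥ u') • vecMulVec u v' := by
  ext i j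
  simp [Matrix.mul_apply, vecMulVec_apply, dotProduct, Finset.sum_mul,
    Finset.mul_sum]
  exact Finset.sum_congr rfl fun k _ => by ring

omit [DecidableEq n] in
lemma aux_sum_conj_mul_eq_trace (A B : Matrix n n ℂ) :
    ∑ p : n × n, (starRingEnd ℂ) (A p.1 p.2) * B p.1 p.2 = trace (Aᴴ * B) := by
  rw [Fintype.sum_prod_type]
  rw [Matrix.trace]
  simp only [Matrix.diag, Matrix.mul_apply, Matrix.conjTranspose_apply]
  rw [Finset.sum_comm]
  simp [RCLike.star_def]

omit [DecidableEq n] in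
lemma aux_sum_normSq_eq_trace (A : Matrix n n ℂ) :
    ((∑ p : n × n, Complex.normSq (A p.1 p.2) : ℝ) : ℂ) = trace (Aᴴ * A) := by
  rw [← aux_sum_conj_mul_eq_trace]
  push_cast
  congr 1; ext p
  rw [Complex.normSq_eq_conj_mul_self]

omit [DecidableEq n] in
lemma aux_dot_real (u : n → ℂ) :
    star u ⬝ᵥ u = ((∑ i, Complex.normSq (u i) : ℝ) : ℂ) := by
  push_cast
  simp only [dotProduct, Pi.star_apply, RCLike.star_def]
  congr 1; ext i
  rw [Complex.normSq_eq_conj_mul_self]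

end helpers

/-- The trace map `X ↦ (Tr X) • 1` as a linear map. -/
def trOne (d : ℕ) : Matrix (Fin d) (Fin d) ℂ →ₗ[ℂ] Matrix (Fin d) (Fin d) ℂ where
  toFun X := Matrix.trace X • (1 : Matrix (Fin d) (Fin d) ℂ)
  map_add' X Y := by simp [add_smul]
  map_smul' c X := by simp [smul_smul]

/-- The depolarizing channel as a linear map. -/
def PhiOne (d : ℕ) : Matrix (Fin d) (Fin d) ℂ →ₗ[ℂ] Matrix (Fin d) (Fin d) ℂ :=
  ((d : ℂ))⁻¹ • trOne d

/-- The reduction map as a linear map. -/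
def PhiTwo (d : ℕ) : Matrix (Fin d) (Fin d) ℂ →ₗ[ℂ] Matrix (Fin d) (Fin d) ℂ :=
  (((d : ℂ) - 1))⁻¹ • (trOne d - LinearMap.id)

lemma PhiOne_apply (d : ℕ) (X : Matrix (Fin d) (Fin d) ℂ) :
    PhiOne d X = ((d : ℂ))⁻¹ • (Matrix.trace X • 1) := rfl

lemma PhiTwo_apply (d : ℕ) (X : Matrix (Fin d) (Fin d) ℂ) :
    PhiTwo d X = (((d : ℂ) - 1))⁻¹ • (Matrix.trace X • 1 - X) := rfl

end

noncomputable section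

lemma coKS_quad (d : ℕ) (hd : 2 ≤ d) (X : Matrix (Fin d) (Fin d) ℂ) (x : Fin d → ℂ) :
    0 ≤ star x ⬝ᵥ ((PhiTwo d (Xᴴ * X) - PhiTwo d X * (PhiTwo d X)ᴴ) *ᵥ x) := by
  by_cases hx : x = 0
  · subst hx; simp
  -- scalar abbreviations
  set t : ℂ := Matrix.trace X with ht
  set s : ℂ := star x ⬝ᵥ (X *ᵥ x) with hs
  set n2 : ℝ := ∑ i, Complex.normSq (x i) with hn2
  set T : ℝ := ∑ p : Fin d × Fin d, Complex.normSq (X p.1 p.2) with hTdef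
  set p2 : ℝ := ∑ i, Complex.normSq ((X *ᵥ x) i) with hp2def
  set q2 : ℝ := ∑ i, Complex.normSq ((Xᴴ *ᵥ x) i) with hq2def
  have hν : star x ⬝ᵥ x = (n2 : ℂ) := aux_dot_real x
  have hn2pos : 0 < n2 := by
    rw [hn2]
    obtain ⟨i, hi⟩ := Function.ne_iff.mp hx
    exact Finset.sum_pos' (fun j _ => Complex.normSq_nonneg _)
      ⟨i, Finset.mem_univ i, by simpa [Complex.normSq_pos] using hi⟩
  have hT' : Matrix.trace (Xᴴ * X) = (T : ℂ) := (aux_sum_normSq_eq_trace X).symm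
  -- s-related dot products
  have hs2 : star (Xᴴ *ᵥ x) ⬝ᵥ x = s := by
    rw [star_mulVec, conjTranspose_conjTranspose, ← dotProduct_mulVec, hs]
  have hss : star x ⬝ᵥ (Xᴴ *ᵥ x) = star s := by
    rw [star_dotProduct, hs2]
  have hp2' : star x ⬝ᵥ ((Xᴴ * X) *ᵥ x) = (p2 : ℂ) := by
    rw [← mulVec_mulVec, dotProduct_mulVec, ← star_mulVec, ← aux_dot_real]
  have hq2' : star x ⬝ᵥ ((X * Xᴴ) *ᵥ x) = (q2 : ℂ) := by
    have : star x ᵥ* X = star (Xᴴ *ᵥ x) := by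
      rw [star_mulVec, conjTranspose_conjTranspose]
    rw [← mulVec_mulVec, dotProduct_mulVec, this, ← aux_dot_real]
  -- the projection-like matrix P
  set P : Matrix (Fin d) (Fin d) ℂ := vecMulVec x (star x) with hP
  have hPH : Pᴴ = P := by
    ext i j
    simp [hP, Matrix.conjTranspose_apply, vecMulVec_apply, mul_comm]
  have htraceP : Matrix.trace P = (n2 : ℂ) := by rw [hP, aux_trace_vmv]; exact hν
  have hPP : P * P = (n2 : ℂ) • P := by rw [hP, aux_vmv_vmv, hν]
  have hsvx : (star x ᵥ* X) ⬝ᵥ x = s := by rw [← dotProduct_mulVec, hs]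
  have hPX : P * X = vecMulVec x (star x ᵥ* X) := aux_vmv_mul _ _ _
  have hXP : X * P = vecMulVec (X *ᵥ x) (star x) := aux_mul_vmv _ _ _
  have htPX : Matrix.trace (P * X) = s := by rw [hPX, aux_trace_vmv, hsvx]
  have htXP : Matrix.trace (X * P) = s := by rw [hXP, aux_trace_vmv, hs]
  have hPXP : P * (X * P) = s • P := by
    rw [hXP, hP, aux_vmv_vmv, hs]
  have hXHP : Xᴴ * P = vecMulVec (Xᴴ *ᵥ x) (star x) := aux_mul_vmv _ _ _
  have htXHP : Matrix.trace (Xᴴ * P) = star s := by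
    rw [hXHP, aux_trace_vmv, hss]
  have htXXP : Matrix.trace (Xᴴ * (X * P)) = (p2 : ℂ) := by
    rw [← Matrix.mul_assoc, hP, aux_mul_vmv, aux_trace_vmv, hp2']
  have htXPX : Matrix.trace (Xᴴ * (P * X)) = (q2 : ℂ) := by
    rw [← Matrix.mul_assoc, Matrix.trace_mul_comm, ← Matrix.mul_assoc, hP,
      aux_mul_vmv, aux_trace_vmv, hq2']
  -- the matrix Q = n2 • 1 - P
  set Q : Matrix (Fin d) (Fin d) ℂ := (n2 : ℂ) • 1 - P with hQ
  have hQH : Qᴴ = Q := by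
    rw [hQ]
    simp [Matrix.conjTranspose_smul, hPH]
  have htQ : Matrix.trace Q = (n2 : ℂ) * (d : ℂ) - (n2 : ℂ) := by
    rw [hQ, Matrix.trace_sub, Matrix.trace_smul, Matrix.trace_one, htraceP]
    simp [mul_comm]
  have hQQ : Q * Q = (n2 : ℂ) • Q := by
    rw [hQ]
    simp only [Matrix.sub_mul, Matrix.mul_sub, Matrix.smul_mul, Matrix.mul_smul,
      Matrix.one_mul, Matrix.mul_one, hPP]
    module
  have hQQ' : ∀ Z : Matrix (Fin d) (Fin d) ℂ, Q * (Q * Z) = (n2 : ℂ) • (Q * Z) := by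
    intro Z
    rw [← Matrix.mul_assoc, hQQ, Matrix.smul_mul]
  -- expansion of Q * (X * Q)
  have E1 : Q * (X * Q) = ((n2 : ℂ) * (n2 : ℂ)) • X - (n2 : ℂ) • (X * P)
      - (n2 : ℂ) • (P * X) + s • P := by
    rw [hQ]
    simp only [Matrix.sub_mul, Matrix.mul_sub, Matrix.smul_mul, Matrix.mul_smul,
      Matrix.one_mul, Matrix.mul_one, hPXP]
    module
  have E1t : Matrix.trace (Q * (X * Q)) = (n2 : ℂ) * (n2 : ℂ) * t - (n2 : ℂ) * s := by
    rw [E1]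
    simp only [Matrix.trace_add, Matrix.trace_sub, Matrix.trace_smul, htPX, htXP,
      htraceP, ht, smul_eq_mul]
    ring
  -- expansion of Xᴴ * (Q * (X * Q))
  have E3 : Xᴴ * (Q * (X * Q)) = ((n2 : ℂ) * (n2 : ℂ)) • (Xᴴ * X)
      - (n2 : ℂ) • (Xᴴ * (X * P)) - (n2 : ℂ) • (Xᴴ * (P * X)) + s • (Xᴴ * P) := by
    rw [E1]
    simp only [Matrix.mul_sub, Matrix.mul_add, Matrix.mul_smul]
  have E3t : Matrix.trace (Xᴴ * (Q * (X * Q)))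
      = (n2 : ℂ) * (n2 : ℂ) * (T : ℂ) - (n2 : ℂ) * (p2 : ℂ) - (n2 : ℂ) * (q2 : ℂ)
        + s * star s := by
    rw [E3]
    simp only [Matrix.trace_add, Matrix.trace_sub, Matrix.trace_smul, htXXP, htXPX,
      htXHP, hT', smul_eq_mul]
  -- Frobenius Cauchy–Schwarz with A = Q, B = Y = Q * (X * Q)
  set Y : Matrix (Fin d) (Fin d) ℂ := Q * (X * Q) with hY
  have hYH : Yᴴ = Q * (Xᴴ * Q) := by
    rw [hY]
    simp [Matrix.conjTranspose_mul, hQH, Matrix.mul_assoc]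
  have hnum : Matrix.trace (Qᴴ * Y) = (n2 : ℂ) ^ 2 * ((n2 : ℂ) * t - s) := by
    rw [hQH, hY, hQQ', Matrix.trace_smul, E1t, smul_eq_mul]
    ring
  have htYY0 : Matrix.trace (Yᴴ * Y)
      = ((n2 : ℂ) * (n2 : ℂ)) * Matrix.trace (Xᴴ * (Q * (X * Q))) := by
    rw [hYH, hY]
    simp only [Matrix.mul_assoc]
    rw [hQQ']
    simp only [Matrix.mul_smul, Matrix.trace_smul, smul_eq_mul]
    rw [Matrix.trace_mul_comm]
    simp only [Matrix.mul_assoc]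
    rw [hQQ]
    simp only [Matrix.mul_smul, Matrix.trace_smul, smul_eq_mul]
    ring
  have htYY : Matrix.trace (Yᴴ * Y)
      = ((n2 ^ 2 * (n2 ^ 2 * T - n2 * p2 - n2 * q2 + normSq s) : ℝ) : ℂ) := by
    rw [htYY0, E3t]
    have hsc : s * star s = ((normSq s : ℝ) : ℂ) := by
      rw [RCLike.star_def, Complex.mul_conj]
    rw [hsc]
    push_cast
    ring
  have hQr : (∑ p : Fin d × Fin d, normSq (Q p.1 p.2)) = n2 ^ 2 * ((d : ℝ) - 1) := by
    apply Complex.ofReal_injective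
    rw [aux_sum_normSq_eq_trace Q, hQH, hQQ, Matrix.trace_smul, htQ, smul_eq_mul]
    push_cast
    ring
  have hYr : (∑ p : Fin d × Fin d, normSq (Y p.1 p.2))
      = n2 ^ 2 * (n2 ^ 2 * T - n2 * p2 - n2 * q2 + normSq s) := by
    apply Complex.ofReal_injective
    rw [aux_sum_normSq_eq_trace Y, htYY]
  have hcs := aux_csq (fun p : Fin d × Fin d => Q p.1 p.2)
    (fun p : Fin d × Fin d => Y p.1 p.2)
  rw [aux_sum_conj_mul_eq_trace Q Y, hnum, hQr, hYr] at hcs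
  have hnum2 : normSq ((n2 : ℂ) ^ 2 * ((n2 : ℂ) * t - s))
      = n2 ^ 4 * normSq ((n2 : ℂ) * t - s) := by
    rw [Complex.normSq_mul, ← Complex.ofReal_pow, Complex.normSq_ofReal]
    ring
  rw [hnum2] at hcs
  have hstar : normSq ((n2 : ℂ) * t - s)
      ≤ ((d : ℝ) - 1) * (n2 ^ 2 * T - n2 * p2 - n2 * q2 + normSq s) := by
    have h4 : (0 : ℝ) < n2 ^ 4 := by positivity
    refine le_of_mul_le_mul_left ?_ h4
    calc n2 ^ 4 * normSq ((n2 : ℂ) * t - s)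
        ≤ n2 ^ 2 * ((d : ℝ) - 1) * (n2 ^ 2 * (n2 ^ 2 * T - n2 * p2 - n2 * q2 + normSq s)) := hcs
      _ = n2 ^ 4 * (((d : ℝ) - 1) * (n2 ^ 2 * T - n2 * p2 - n2 * q2 + normSq s)) := by ring
  have hcs2 : normSq s ≤ q2 * n2 := by
    have h := aux_csq (Xᴴ *ᵥ x) x
    have he : (∑ i, (starRingEnd ℂ) ((Xᴴ *ᵥ x) i) * x i) = s := by
      rw [← hs2]
      simp [dotProduct, RCLike.star_def]
    rw [he] at h
    rw [hq2def, hn2]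
    exact h
  -- value of the quadratic form
  set γ : ℝ := ((d : ℝ) - 1)⁻¹ with hγdef
  have hd2 : (2 : ℝ) ≤ (d : ℝ) := by exact_mod_cast hd
  have hδ1 : (1 : ℝ) ≤ (d : ℝ) - 1 := by linarith
  have hδne : (d : ℝ) - 1 ≠ 0 := by linarith
  have hγc : (((d : ℂ) - 1))⁻¹ = (γ : ℂ) := by
    rw [hγdef]
    push_cast
    ring
  have valA : star x ⬝ᵥ (PhiTwo d (Xᴴ * X) *ᵥ x)
      = (γ : ℂ) * ((T : ℂ) * (n2 : ℂ) - (p2 : ℂ)) := by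
    rw [PhiTwo_apply, hγc, hT', smul_mulVec, sub_mulVec, smul_mulVec,
      one_mulVec, dotProduct_smul, dotProduct_sub, dotProduct_smul, hν, hp2',
      smul_eq_mul, smul_eq_mul]
  have hBH : (PhiTwo d X)ᴴ = (γ : ℂ) • ((starRingEnd ℂ) t • 1 - Xᴴ) := by
    rw [PhiTwo_apply, hγc, Matrix.conjTranspose_smul, Matrix.conjTranspose_sub,
      Matrix.conjTranspose_smul, Matrix.conjTranspose_one]
    simp [RCLike.star_def, Complex.conj_ofReal, ht]
  have hz : (PhiTwo d X)ᴴ *ᵥ x = (γ : ℂ) • ((starRingEnd ℂ) t • x - Xᴴ *ᵥ x) := by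
    rw [hBH, smul_mulVec, sub_mulVec, smul_mulVec, one_mulVec]
  have valB : star x ⬝ᵥ ((PhiTwo d X * (PhiTwo d X)ᴴ) *ᵥ x)
      = (γ : ℂ) * (γ : ℂ) * ((t * (starRingEnd ℂ) t) * (n2 : ℂ)
        - t * (starRingEnd ℂ) s - (starRingEnd ℂ) t * s + (q2 : ℂ)) := by
    rw [← mulVec_mulVec, dotProduct_mulVec]
    have h1 : star x ᵥ* PhiTwo d X = star ((PhiTwo d X)ᴴ *ᵥ x) := by
      rw [star_mulVec, conjTranspose_conjTranspose]
    rw [h1, hz]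
    have hstz : star ((γ : ℂ) • ((starRingEnd ℂ) t • x - Xᴴ *ᵥ x))
        = (γ : ℂ) • (t • star x - star (Xᴴ *ᵥ x)) := by
      rw [star_smul, star_sub, star_smul]
      simp [RCLike.star_def, Complex.conj_ofReal]
    rw [hstz]
    simp only [smul_dotProduct, dotProduct_smul, sub_dotProduct, dotProduct_sub,
      smul_eq_mul]
    rw [hν, hss, hs2, aux_dot_real (Xᴴ *ᵥ x), ← hq2def]
    simp only [RCLike.star_def]
    ring
  have hval : star x ⬝ᵥ ((PhiTwo d (Xᴴ * X) - PhiTwo d X * (PhiTwo d X)ᴴ) *ᵥ x)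
      = ((γ * (T * n2 - p2)
          - γ ^ 2 * (normSq t * n2 - 2 * (t * (starRingEnd ℂ) s).re + q2) : ℝ) : ℂ) := by
    rw [sub_mulVec, dotProduct_sub, valA, valB]
    have h1 : t * (starRingEnd ℂ) t = ((normSq t : ℝ) : ℂ) := Complex.mul_conj t
    have h2 : t * (starRingEnd ℂ) s + (starRingEnd ℂ) t * s
        = ((2 * (t * (starRingEnd ℂ) s).re : ℝ) : ℂ) := by
      calc t * (starRingEnd ℂ) s + (starRingEnd ℂ) t * s
          = (t * (starRingEnd ℂ) s) + (starRingEnd ℂ) (t * (starRingEnd ℂ) s) := by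
            rw [_root_.map_mul, Complex.conj_conj]
        _ = _ := Complex.add_conj _
    push_cast at h2 ⊢
    linear_combination (γ:ℂ)^2 * h2 - (γ:ℂ)^2 * (n2:ℂ) * h1
  rw [hval]
  rw [Complex.zero_le_real]
  -- the real inequality
  have hexp : normSq ((n2 : ℂ) * t - s)
      = n2 ^ 2 * normSq t - 2 * n2 * (t * (starRingEnd ℂ) s).re + normSq s := by
    rw [Complex.normSq_sub, Complex.normSq_mul, Complex.normSq_ofReal,
      mul_assoc (n2:ℂ) t ((starRingEnd ℂ) s), Complex.re_ofReal_mul]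
    ring
  have hkey : 0 ≤ n2 * (((d : ℝ) - 1) * (T * n2 - p2)
      - (normSq t * n2 - 2 * (t * (starRingEnd ℂ) s).re + q2)) := by
    have hmn : 0 ≤ ((d : ℝ) - 2) * (q2 * n2 - normSq s) :=
      mul_nonneg (by linarith) (by linarith)
    calc (0:ℝ) ≤ ((d : ℝ) - 2) * (q2 * n2 - normSq s) := hmn
      _ = ((d : ℝ) - 1) * (T * n2 ^ 2 - p2 * n2)
          - (((d : ℝ) - 1) * (n2 ^ 2 * T - n2 * p2 - n2 * q2 + normSq s))
          + normSq s - q2 * n2 := by ring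
      _ ≤ ((d : ℝ) - 1) * (T * n2 ^ 2 - p2 * n2)
          - normSq ((n2 : ℂ) * t - s) + normSq s - q2 * n2 := by linarith [hstar]
      _ = n2 * (((d : ℝ) - 1) * (T * n2 - p2)
          - (normSq t * n2 - 2 * (t * (starRingEnd ℂ) s).re + q2)) := by
        rw [hexp]; ring
  have hE : 0 ≤ ((d : ℝ) - 1) * (T * n2 - p2)
      - (normSq t * n2 - 2 * (t * (starRingEnd ℂ) s).re + q2) := by
    have h0 : n2 * 0 ≤ n2 * (((d : ℝ) - 1) * (T * n2 - p2)
        - (normSq t * n2 - 2 * (t * (starRingEnd ℂ) s).re + q2)) := by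
      rw [mul_zero]; exact hkey
    exact le_of_mul_le_mul_left h0 hn2pos
  have hfin : γ * (T * n2 - p2)
      - γ ^ 2 * (normSq t * n2 - 2 * (t * (starRingEnd ℂ) s).re + q2)
      = γ ^ 2 * (((d : ℝ) - 1) * (T * n2 - p2)
        - (normSq t * n2 - 2 * (t * (starRingEnd ℂ) s).re + q2)) := by
    rw [hγdef]
    field_simp
  rw [hfin]
  exact mul_nonneg (by positivity) hE

lemma psd_smul_one (d : ℕ) (r : ℝ) (hr : 0 ≤ r) :
    (((r : ℂ)) • (1 : Matrix (Fin d) (Fin d) ℂ)).PosSemidef := by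
  rw [posSemidef_iff_dotProduct_mulVec]
  constructor
  · show _ᴴ = _
    simp [Matrix.conjTranspose_smul]
  · intro y
    rw [smul_mulVec, one_mulVec, dotProduct_smul, smul_eq_mul]
    exact mul_nonneg (Complex.zero_le_real.mpr hr) (dotProduct_star_self_nonneg y)

lemma coKS (d : ℕ) (hd : 2 ≤ d) (X : Matrix (Fin d) (Fin d) ℂ) :
    (PhiTwo d (Xᴴ * X) - PhiTwo d X * (PhiTwo d X)ᴴ).PosSemidef := by
  rw [posSemidef_iff_dotProduct_mulVec]
  constructor
  · apply Matrix.IsHermitian.sub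
    · show _ᴴ = _
      rw [PhiTwo_apply]
      have h1 : (Xᴴ * X)ᴴ = Xᴴ * X := by
        rw [Matrix.conjTranspose_mul, Matrix.conjTranspose_conjTranspose]
      have h2 : star (Matrix.trace (Xᴴ * X)) = Matrix.trace (Xᴴ * X) := by
        rw [← aux_sum_normSq_eq_trace X]
        simp
      rw [Matrix.conjTranspose_smul, Matrix.conjTranspose_sub,
        Matrix.conjTranspose_smul, Matrix.conjTranspose_one, h1, h2]
      simp
    · exact Matrix.isHermitian_mul_conjTranspose_self _
  · exact coKS_quad d hd X

lemma normSq_trace_le (d : ℕ) (X : Matrix (Fin d) (Fin d) ℂ) :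
    Complex.normSq (Matrix.trace X)
      ≤ (d : ℝ) * ∑ p : Fin d × Fin d, Complex.normSq (X p.1 p.2) := by
  have h := aux_csq (fun p : Fin d × Fin d => (1 : Matrix (Fin d) (Fin d) ℂ) p.1 p.2)
    (fun p : Fin d × Fin d => X p.1 p.2)
  rw [aux_sum_conj_mul_eq_trace (1 : Matrix (Fin d) (Fin d) ℂ) X] at h
  have h1 : ((1 : Matrix (Fin d) (Fin d) ℂ))ᴴ * X = X := by
    rw [Matrix.conjTranspose_one, Matrix.one_mul]
  have h2 : (∑ p : Fin d × Fin d, Complex.normSq ((1 : Matrix (Fin d) (Fin d) ℂ) p.1 p.2))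
      = (d : ℝ) := by
    apply Complex.ofReal_injective
    rw [aux_sum_normSq_eq_trace (1 : Matrix (Fin d) (Fin d) ℂ), Matrix.conjTranspose_one,
      Matrix.one_mul, Matrix.trace_one]
    simp
  rw [h1, h2] at h
  exact h

lemma KS1 (d : ℕ) (hd : 2 ≤ d) (X : Matrix (Fin d) (Fin d) ℂ) :
    (PhiOne d (Xᴴ * X) - (PhiOne d X)ᴴ * PhiOne d X).PosSemidef := by
  have hd0 : (0:ℝ) < (d : ℝ) := by
    have : (2:ℝ) ≤ (d:ℝ) := by exact_mod_cast hd
    linarith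
  set T : ℝ := ∑ p : Fin d × Fin d, Complex.normSq (X p.1 p.2) with hTdef
  set t : ℂ := Matrix.trace X with ht
  have hT' : Matrix.trace (Xᴴ * X) = (T : ℂ) := (aux_sum_normSq_eq_trace X).symm
  have e1 : PhiOne d (Xᴴ * X) = ((T / d : ℝ) : ℂ) • 1 := by
    rw [PhiOne_apply, hT', smul_smul]
    push_cast
    rw [div_eq_inv_mul]
  have e2 : (PhiOne d X)ᴴ * PhiOne d X
      = ((Complex.normSq t / d ^ 2 : ℝ) : ℂ) • 1 := by
    rw [PhiOne_apply, Matrix.conjTranspose_smul, Matrix.conjTranspose_smul,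
      Matrix.conjTranspose_one, Matrix.smul_mul, Matrix.mul_smul, Matrix.smul_mul,
      Matrix.one_mul, smul_smul, smul_smul, smul_smul]
    congr 1
    have : star t * t = ((Complex.normSq t : ℝ) : ℂ) := by
      rw [RCLike.star_def, mul_comm, Complex.mul_conj]
    push_cast
    rw [← ht]
    field_simp
    rw [star_div₀, star_one, RCLike.star_def, Complex.conj_natCast,
      mul_assoc, mul_comm ((starRingEnd ℂ) t) t, Complex.mul_conj,
      mul_one_div_cancel (by exact_mod_cast hd0.ne'), one_mul]
  rw [e1, e2, ← sub_smul]
  rw [← Complex.ofReal_sub]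
  apply psd_smul_one
  rw [div_sub_div _ _ (ne_of_gt hd0) (by positivity), le_div_iff₀ (by positivity)]
  have := normSq_trace_le d X
  rw [← hTdef, ← ht] at this
  nlinarith [this, hd0]

lemma PhiOne_one (d : ℕ) (hd : 2 ≤ d) : PhiOne d 1 = 1 := by
  have hd0 : (d : ℂ) ≠ 0 := by
    simp only [ne_eq, Nat.cast_eq_zero]
    omega
  rw [PhiOne_apply, Matrix.trace_one]
  simp only [Fintype.card_fin]
  rw [smul_smul, inv_mul_cancel₀ hd0, one_smul]

lemma PhiTwo_one (d : ℕ) (hd : 2 ≤ d) : PhiTwo d 1 = 1 := by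
  have hd1 : (d : ℂ) - 1 ≠ 0 := by
    have h2 : ((d : ℝ) - 1 : ℝ) ≠ 0 := by
      have : (2:ℝ) ≤ (d:ℝ) := by exact_mod_cast hd
      linarith
    have := Complex.ofReal_ne_zero.mpr h2
    push_cast at this
    exact this
  rw [PhiTwo_apply, Matrix.trace_one]
  simp only [Fintype.card_fin]
  have : (d : ℂ) • (1 : Matrix (Fin d) (Fin d) ℂ) - 1
      = ((d : ℂ) - 1) • (1 : Matrix (Fin d) (Fin d) ℂ) := by
    rw [sub_smul, one_smul]
  rw [this, smul_smul, inv_mul_cancel₀ hd1, one_smul]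

end

noncomputable section

theorem stmt6 (d : ℕ) (hd : 2 ≤ d) (a : ℝ) (ha0 : 0 ≤ a) (ha1 : a ≤ 1) :
    ∃ (l : ℝ) (Φ₁ Φ₂ : Matrix (Fin d) (Fin d) ℂ →ₗ[ℂ] Matrix (Fin d) (Fin d) ℂ),
      0 ≤ l ∧ l ≤ 1 ∧
      Φ₁ 1 = 1 ∧ Φ₂ 1 = 1 ∧
      (∀ X : Matrix (Fin d) (Fin d) ℂ,
        (Φ₁ (Xᴴ * X) - (Φ₁ X)ᴴ * Φ₁ X).PosSemidef) ∧
      (∀ X : Matrix (Fin d) (Fin d) ℂ,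
        (Φ₂ (Xᴴ * X) - Φ₂ X * (Φ₂ X)ᴴ).PosSemidef) ∧
      (∀ X : Matrix (Fin d) (Fin d) ℂ,
        (1 / ((d : ℂ) - (a : ℂ))) •
            (Matrix.trace X • (1 : Matrix (Fin d) (Fin d) ℂ) - (a : ℂ) • X)
          = (l : ℂ) • Φ₁ X + ((1 : ℂ) - (l : ℂ)) • Φ₂ X) := by
  have hd2R : (2:ℝ) ≤ (d:ℝ) := by exact_mod_cast hd
  have hdaPos : (0:ℝ) < (d:ℝ) - a := by linarith
  refine ⟨(d:ℝ) * (1 - a) / ((d:ℝ) - a), PhiOne d, PhiTwo d, ?_, ?_,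
    PhiOne_one d hd, PhiTwo_one d hd, KS1 d hd, coKS d hd, ?_⟩
  · exact div_nonneg (mul_nonneg (by positivity) (by linarith)) hdaPos.le
  · rw [div_le_one hdaPos]
    nlinarith [mul_nonneg ha0 (by linarith : (0:ℝ) ≤ (d:ℝ) - 1)]
  · intro X
    have hdc : (d:ℂ) ≠ 0 := by
      simp only [ne_eq, Nat.cast_eq_zero]; omega
    have hd1c : (d:ℂ) - 1 ≠ 0 := by
      have h2 : ((d : ℝ) - 1 : ℝ) ≠ 0 := by linarith
      have := Complex.ofReal_ne_zero.mpr h2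
      push_cast at this
      exact this
    have hdac : (d:ℂ) - (a:ℂ) ≠ 0 := by
      have := Complex.ofReal_ne_zero.mpr (ne_of_gt hdaPos)
      push_cast at this
      exact this
    have hlc : (((d:ℝ) * (1 - a) / ((d:ℝ) - a) : ℝ) : ℂ)
        = (d:ℂ) * (1 - (a:ℂ)) / ((d:ℂ) - (a:ℂ)) := by push_cast; ring
    rw [PhiOne_apply, PhiTwo_apply, hlc]
    match_scalars
    · field_simp
      ring
    · field_simp
      ring



end
end

section
/- Let d ≥ 1, k ≥ 1, and let Φ : M_d(ℂ) → M_d(ℂ) be a unital linear map which is (k+1)-positive, i.e. the amplification Φ_{k+1} = id_{k+1} ⊗ Φ maps positive semidefinite matrices in M_{k+1}(M_d(ℂ)) to positive semidefinite matrices. Then Φ is a k-Kadison–Schwarz operator: Φ_k(X*X) ≥ Φ_k(X)*·Φ_k(X) for all X ∈ M_k(M_d(ℂ)). -/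
open scoped ComplexOrder
open Matrix

noncomputable section

/-- `Φ` is positive whenever its amplification is. -/
lemma aux_phi_psd (d k : ℕ)
    (Φ : Matrix (Fin d) (Fin d) ℂ →ₗ[ℂ] Matrix (Fin d) (Fin d) ℂ)
    (hpos : ∀ X : Matrix (Fin (k + 1) × Fin d) (Fin (k + 1) × Fin d) ℂ,
      X.PosSemidef → (amp (k + 1) (⇑Φ) X).PosSemidef)
    (P : Matrix (Fin d) (Fin d) ℂ) (hP : P.PosSemidef) : (Φ P).PosSemidef := by
  set B : Matrix (Fin (k+1) × Fin d) (Fin (k+1) × Fin d) ℂ :=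
    Matrix.of fun p q => if p.1 = 0 ∧ q.1 = 0 then P p.2 q.2 else 0 with hBdef
  have hB : B.PosSemidef := by
    rw [posSemidef_iff_dotProduct_mulVec]
    constructor
    · ext ⟨i,a⟩ ⟨j,b⟩
      simp only [conjTranspose_apply, hBdef, Matrix.of_apply]
      by_cases hij : i = 0 ∧ j = 0
      · obtain ⟨hi, hj⟩ := hij
        subst hi; subst hj
        simp only [and_self, if_true]
        have := congrFun (congrFun hP.1 a) b
        simpa [conjTranspose_apply] using this
      · rw [if_neg, if_neg]
        · simp
        · exact hij
        · exact fun h => hij ⟨h.2, h.1⟩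
    · intro x
      have h0 := hP.dotProduct_mulVec_nonneg (fun a => x (0, a))
      have : star x ⬝ᵥ (B *ᵥ x)
          = star (fun a => x (0,a)) ⬝ᵥ (P *ᵥ fun a => x (0,a)) := by
        simp only [dotProduct, mulVec, Pi.star_apply, hBdef, Matrix.of_apply]
        rw [Fintype.sum_prod_type]
        simp only [dotProduct]
        rw [Finset.sum_eq_single 0]
        · congr 1; ext a; congr 1
          rw [Fintype.sum_prod_type]
          rw [Finset.sum_eq_single 0]
          · simp
          · intro j _ hj; simp [hj]
          · simp
        · intro i _ hi; simp [hi]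
        · simp
      rw [this]; exact h0
  have hbig := hpos B hB
  have hampB : ∀ (i j : Fin (k+1)) (a b : Fin d),
      amp (k+1) (⇑Φ) B ((i,a)) ((j,b)) = if i = 0 ∧ j = 0 then Φ P a b else 0 := by
    intro i j a b
    have : (Matrix.of fun a b => B ((i,a)) ((j,b))) =
        (if i = 0 ∧ j = 0 then P else 0) := by
      ext a' b'
      by_cases h : i = 0 ∧ j = 0 <;> simp [hBdef, h]
    simp only [amp, Matrix.of_apply]
    rw [show (Matrix.of fun a' b' => B (i, a') (j, b')) = (if i = 0 ∧ j = 0 then P else 0) from this]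
    by_cases h : i = 0 ∧ j = 0 <;> simp [h]
  rw [posSemidef_iff_dotProduct_mulVec]
  constructor
  · ext a b
    have := congrFun (congrFun hbig.1 ((0:Fin (k+1)), a)) ((0:Fin (k+1)), b)
    simp only [conjTranspose_apply] at this ⊢
    rw [hampB, hampB] at this
    simpa using this
  · intro w
    have h0 := hbig.dotProduct_mulVec_nonneg (fun p => if p.1 = 0 then w p.2 else 0)
    have : star (fun p : Fin (k+1) × Fin d => if p.1 = 0 then w p.2 else 0) ⬝ᵥ
        (amp (k+1) (⇑Φ) B *ᵥ fun p => if p.1 = 0 then w p.2 else 0)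
        = star w ⬝ᵥ (Φ P *ᵥ w) := by
      simp only [dotProduct, mulVec, Pi.star_apply]
      rw [Fintype.sum_prod_type]
      rw [Finset.sum_eq_single 0]
      · simp only [dotProduct]
        congr 1; ext a; congr 1
        rw [Fintype.sum_prod_type]
        rw [Finset.sum_eq_single 0]
        · simp [hampB]
        · intro j _ hj; simp [hj]
        · simp
      · intro i _ hi; simp [hi]
      · simp
    rw [this] at h0; exact h0

lemma comb_herm {d : ℕ} (a b c e : Matrix (Fin d) (Fin d) ℂ)
    (ha : aᴴ = a) (hb : bᴴ = b) (hc : cᴴ = c) (he : eᴴ = e) :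
    ((4:ℂ)⁻¹ • (a + Complex.I • b - c - Complex.I • e))ᴴ
      = (4:ℂ)⁻¹ • (a - Complex.I • b - c + Complex.I • e) := by
  have h4 : star ((4:ℂ)⁻¹) = (4:ℂ)⁻¹ := by
    simp [star_inv₀]
  simp only [conjTranspose_smul, conjTranspose_add, conjTranspose_sub, ha, hb, hc, he,
    Complex.star_def, Complex.conj_I, neg_smul, h4]
  abel

/-- A positive map is hermitian-preserving (polarization). -/
lemma aux_phi_herm (d : ℕ)
    (Φ : Matrix (Fin d) (Fin d) ℂ →ₗ[ℂ] Matrix (Fin d) (Fin d) ℂ)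
    (hΦpsd : ∀ P : Matrix (Fin d) (Fin d) ℂ, P.PosSemidef → (Φ P).PosSemidef)
    (M : Matrix (Fin d) (Fin d) ℂ) : Φ Mᴴ = (Φ M)ᴴ := by
  set P : ℂ → Matrix (Fin d) (Fin d) ℂ := fun c => (M + c • 1)ᴴ * (M + c • 1) with hPdef
  have hPexp : ∀ c : ℂ, P c = Mᴴ * M + c • Mᴴ + (star c) • M + (c * star c) • 1 := by
    intro c
    simp only [hPdef, conjTranspose_add, conjTranspose_smul, conjTranspose_one,
      add_mul, mul_add, Matrix.smul_mul, Matrix.mul_smul, Matrix.one_mul, Matrix.mul_one,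
      smul_smul, starRingEnd_apply]
    ring_nf
    abel
  have hM : M = (4:ℂ)⁻¹ • (P 1 + Complex.I • P Complex.I - P (-1) - Complex.I • P (-Complex.I)) := by
    rw [hPexp, hPexp, hPexp, hPexp]
    simp only [star_one, star_neg, Complex.star_def, Complex.conj_I, one_smul, neg_neg,
      mul_one, one_mul, neg_smul, smul_neg, smul_add, smul_sub, smul_smul]
    match_scalars <;> ring_nf <;> simp [Complex.I_sq] <;> ring
  have hHerm : ∀ c : ℂ, (Φ (P c))ᴴ = Φ (P c) := fun c =>
    (hΦpsd (P c) (posSemidef_conjTranspose_mul_self _)).1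
  have hPc : ∀ c : ℂ, (P c)ᴴ = P c := fun c =>
    (posSemidef_conjTranspose_mul_self (M + c • 1)).1
  have hMH : Mᴴ = (4:ℂ)⁻¹ • (P 1 - Complex.I • P Complex.I - P (-1) + Complex.I • P (-Complex.I)) := by
    conv_lhs => rw [hM, comb_herm _ _ _ _ (hPc 1) (hPc Complex.I) (hPc (-1)) (hPc (-Complex.I))]
  have expand : ∀ N₁ N₂ N₃ N₄ : Matrix (Fin d) (Fin d) ℂ,
      Φ ((4:ℂ)⁻¹ • (N₁ + Complex.I • N₂ - N₃ - Complex.I • N₄))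
        = (4:ℂ)⁻¹ • (Φ N₁ + Complex.I • Φ N₂ - Φ N₃ - Complex.I • Φ N₄) := by
    intro N₁ N₂ N₃ N₄
    simp only [LinearMap.map_smul, map_add, map_sub]
  have expand' : ∀ N₁ N₂ N₃ N₄ : Matrix (Fin d) (Fin d) ℂ,
      Φ ((4:ℂ)⁻¹ • (N₁ - Complex.I • N₂ - N₃ + Complex.I • N₄))
        = (4:ℂ)⁻¹ • (Φ N₁ - Complex.I • Φ N₂ - Φ N₃ + Complex.I • Φ N₄) := by
    intro N₁ N₂ N₃ N₄
    simp only [LinearMap.map_smul, map_add, map_sub]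
  rw [hMH, expand']
  conv_rhs => rw [hM, expand,
    comb_herm _ _ _ _ (hHerm 1) (hHerm Complex.I) (hHerm (-1)) (hHerm (-Complex.I))]

/-- The amplification of a hermitian-preserving map commutes with `ᴴ`. -/
lemma aux_amp_ct (d k : ℕ)
    (Φ : Matrix (Fin d) (Fin d) ℂ →ₗ[ℂ] Matrix (Fin d) (Fin d) ℂ)
    (hherm : ∀ M : Matrix (Fin d) (Fin d) ℂ, Φ Mᴴ = (Φ M)ᴴ)
    (M : Matrix (Fin k × Fin d) (Fin k × Fin d) ℂ) :
    (amp k (⇑Φ) M)ᴴ = amp k (⇑Φ) Mᴴ := by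
  ext p q
  simp only [conjTranspose_apply, amp, Matrix.of_apply]
  have : (Matrix.of fun i j => star (M (q.1, j) (p.1, i)))
      = (Matrix.of fun i j => M (q.1, i) (p.1, j))ᴴ := by
    ext i j; simp [conjTranspose_apply]
  rw [this, hherm]
  simp [conjTranspose_apply]

lemma quad_expand (n d : ℕ)
    (Φ : Matrix (Fin d) (Fin d) ℂ → Matrix (Fin d) (Fin d) ℂ)
    (M : Matrix (Fin n × Fin d) (Fin n × Fin d) ℂ) (w : Fin n × Fin d → ℂ) :
    star w ⬝ᵥ (amp n Φ M *ᵥ w)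
      = ∑ i, ∑ j, ∑ a, ∑ b, star (w (i,a)) *
          (Φ (Matrix.of fun a b => M ((i,a)) ((j,b))) a b * w ((j,b))) := by
  simp only [dotProduct, mulVec, Pi.star_apply, amp, Matrix.of_apply, dotProduct,
    Fintype.sum_prod_type, Finset.mul_sum]
  refine Finset.sum_congr rfl fun i _ => ?_
  rw [Finset.sum_comm]

lemma sum_comm3 {M : Type*} [AddCommMonoid M] {α β γ : Type*}
    [Fintype α] [Fintype β] [Fintype γ] (f : α → β → γ → M) :
    ∑ a, ∑ b, ∑ c, f a b c = ∑ c, ∑ a, ∑ b, f a b c := by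
  rw [show (∑ a, ∑ b, ∑ c, f a b c) = ∑ a, ∑ c, ∑ b, f a b c from
    Finset.sum_congr rfl fun a _ => Finset.sum_comm, Finset.sum_comm]

lemma sum_comm4 {M : Type*} [AddCommMonoid M] {α β γ δ : Type*}
    [Fintype α] [Fintype β] [Fintype γ] [Fintype δ] (f : α → β → γ → δ → M) :
    ∑ a, ∑ b, ∑ c, ∑ e, f a b c e = ∑ e, ∑ a, ∑ b, ∑ c, f a b c e := by
  rw [show (∑ a, ∑ b, ∑ c, ∑ e, f a b c e) = ∑ a, ∑ e, ∑ b, ∑ c, f a b c e from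
    Finset.sum_congr rfl fun a _ => sum_comm3 _, Finset.sum_comm]

lemma sum_comm5 {M : Type*} [AddCommMonoid M] {α β γ δ ε : Type*}
    [Fintype α] [Fintype β] [Fintype γ] [Fintype δ] [Fintype ε]
    (f : α → β → γ → δ → ε → M) :
    ∑ a, ∑ b, ∑ c, ∑ e, ∑ l, f a b c e l = ∑ l, ∑ a, ∑ b, ∑ c, ∑ e, f a b c e l := by
  rw [show (∑ a, ∑ b, ∑ c, ∑ e, ∑ l, f a b c e l)
      = ∑ a, ∑ l, ∑ b, ∑ c, ∑ e, f a b c e l from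
    Finset.sum_congr rfl fun a _ => sum_comm4 _, Finset.sum_comm]

theorem stmt13 (d k : ℕ) (hd : 1 ≤ d) (hk : 1 ≤ k)
    (Φ : Matrix (Fin d) (Fin d) ℂ →ₗ[ℂ] Matrix (Fin d) (Fin d) ℂ)
    (hunital : Φ 1 = 1)
    (hpos : ∀ X : Matrix (Fin (k + 1) × Fin d) (Fin (k + 1) × Fin d) ℂ,
      X.PosSemidef → (amp (k + 1) (⇑Φ) X).PosSemidef) :
    ∀ X : Matrix (Fin k × Fin d) (Fin k × Fin d) ℂ,
      (amp k (⇑Φ) (Xᴴ * X) - (amp k (⇑Φ) X)ᴴ * amp k (⇑Φ) X).PosSemidef := by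
  intro X
  have hΦpsd : ∀ P : Matrix (Fin d) (Fin d) ℂ, P.PosSemidef → (Φ P).PosSemidef :=
    aux_phi_psd d k Φ hpos
  have hherm : ∀ M : Matrix (Fin d) (Fin d) ℂ, Φ Mᴴ = (Φ M)ᴴ :=
    aux_phi_herm d Φ hΦpsd
  rw [posSemidef_iff_dotProduct_mulVec]
  constructor
  · apply Matrix.IsHermitian.sub
    · show (amp k (⇑Φ) (Xᴴ * X))ᴴ = _
      rw [aux_amp_ct d k Φ hherm, conjTranspose_mul, conjTranspose_conjTranspose]
    · exact isHermitian_conjTranspose_mul_self _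
  · intro ξ
    set B : Matrix (Fin k × Fin d) (Fin k × Fin d) ℂ := amp k (⇑Φ) X with hBdef
    set y : Fin k × Fin d → ℂ := B *ᵥ ξ with hydef
    set Bl : Fin k → Fin k → Matrix (Fin d) (Fin d) ℂ :=
      fun l i => Matrix.of fun a b => X (l, a) (i, b) with hBldef
    set A : Fin k → Fin (k+1) → Matrix (Fin d) (Fin d) ℂ :=
      fun l i => if h : (i : ℕ) < k then Bl l ⟨i, h⟩ else 1 with hAdef
    set Y : Fin k → Matrix (Fin (k+1) × Fin d) (Fin (k+1) × Fin d) ℂ :=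
      fun l => Matrix.of fun p q => if p.1 = 0 then A l q.1 p.2 q.2 else 0 with hYdef
    set u : Fin k → Fin (k+1) → Fin d → ℂ :=
      fun l i a => if h : (i : ℕ) < k then ξ (⟨i, h⟩, a) else -(y (l, a)) with hudef
    set v : Fin k → (Fin (k+1) × Fin d) → ℂ := fun l p => u l p.1 p.2 with hvdef
    have hAc : ∀ (l : Fin k) (i : Fin k), A l i.castSucc = Bl l i := by
      intro l i
      simp [hAdef, i.isLt]
    have hAlast : ∀ l : Fin k, A l (Fin.last k) = 1 := by
      intro l; simp [hAdef]
    have huc : ∀ (l : Fin k) (i : Fin k) (a : Fin d), u l i.castSucc a = ξ (i, a) := by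
      intro l i a; simp [hudef, i.isLt]
    have hulast : ∀ (l : Fin k) (a : Fin d), u l (Fin.last k) a = -(y (l, a)) := by
      intro l a; simp [hudef]
    have hof : ∀ (l : Fin k) (i j : Fin (k+1)),
        (Matrix.of fun a b => ((Y l)ᴴ * Y l) ((i,a)) ((j,b))) = (A l i)ᴴ * (A l j) := by
      intro l i j
      ext a b
      simp only [Matrix.of_apply, Matrix.mul_apply, conjTranspose_apply, hYdef,
        Fintype.sum_prod_type]
      rw [Finset.sum_eq_single (0 : Fin (k+1))]
      · simp
      · intro r _ hr; simp [hr]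
      · simp
    have hy : ∀ (l : Fin k) (a : Fin d), y (l, a) = ∑ j, ∑ b, Φ (Bl l j) a b * ξ (j, b) := by
      intro l a
      simp only [hydef, hBdef, mulVec, dotProduct, amp, Matrix.of_apply, hBldef,
        Fintype.sum_prod_type]
    have hs : ∀ l : Fin k, 0 ≤ star (v l) ⬝ᵥ (amp (k+1) (⇑Φ) ((Y l)ᴴ * Y l) *ᵥ v l) :=
      fun l => (hpos _ (posSemidef_conjTranspose_mul_self _)).dotProduct_mulVec_nonneg (v l)
    set T : Fin k → Fin (k+1) → Fin (k+1) → ℂ :=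
      fun l i j => ∑ a, ∑ b, star (u l i a) * (Φ ((A l i)ᴴ * (A l j)) a b * u l j b)
      with hTdef
    have hS : ∀ l : Fin k, star (v l) ⬝ᵥ (amp (k+1) (⇑Φ) ((Y l)ᴴ * Y l) *ᵥ v l)
        = ∑ i, ∑ j, T l i j := by
      intro l
      rw [quad_expand]
      simp only [hof, hvdef, hTdef]
    have hsplit : ∀ l : Fin k, (∑ i, ∑ j, T l i j)
        = (∑ i : Fin k, ∑ j : Fin k, T l i.castSucc j.castSucc)
          + (∑ i : Fin k, T l i.castSucc (Fin.last k))
          + (∑ j : Fin k, T l (Fin.last k) j.castSucc)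
          + T l (Fin.last k) (Fin.last k) := by
      intro l
      rw [Fin.sum_univ_castSucc (f := fun i => ∑ j, T l i j)]
      have h1 : ∀ i : Fin (k+1), (∑ j, T l i j)
          = (∑ j : Fin k, T l i j.castSucc) + T l i (Fin.last k) :=
        fun i => Fin.sum_univ_castSucc _
      rw [Finset.sum_congr rfl (fun i _ => h1 i.castSucc), h1 (Fin.last k),
        Finset.sum_add_distrib]
      ring
    -- E1
    have hE1 : star ξ ⬝ᵥ (amp k (⇑Φ) (Xᴴ * X) *ᵥ ξ)
        = ∑ l, ∑ i : Fin k, ∑ j : Fin k, T l i.castSucc j.castSucc := by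
      rw [quad_expand]
      have hblock : ∀ i j : Fin k, (Matrix.of fun a b => (Xᴴ * X) ((i,a)) ((j,b)))
          = ∑ l, (Bl l i)ᴴ * Bl l j := by
        intro i j; ext a b
        simp [Matrix.mul_apply, conjTranspose_apply, Fintype.sum_prod_type,
          Matrix.sum_apply, hBldef]
      simp only [hblock, map_sum, Matrix.sum_apply, Finset.sum_mul, Finset.mul_sum]
      rw [sum_comm5 (fun i j a b l => star (ξ (i,a)) *
        (Φ ((Bl l i)ᴴ * Bl l j) a b * ξ (j,b)))]
      simp only [hTdef, hAc, huc]
    -- star of y entries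
    have hystar : ∀ (l : Fin k) (b : Fin d),
        star (y (l, b)) = ∑ i, ∑ a, star (Φ (Bl l i) b a) * star (ξ (i, a)) := by
      intro l b
      rw [hy l b]
      simp only [star_sum, star_mul']
    -- E2
    have hE2 : ∀ l : Fin k, (∑ i : Fin k, T l i.castSucc (Fin.last k))
        = -∑ b, star (y (l, b)) * y (l, b) := by
      intro l
      calc ∑ i : Fin k, T l i.castSucc (Fin.last k)
          = ∑ i, ∑ a, ∑ b, star (ξ (i,a)) * (star (Φ (Bl l i) b a) * -(y (l,b))) := by
            simp only [hTdef, hAc, hAlast, huc, hulast, Matrix.mul_one, hherm,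
              conjTranspose_apply]
        _ = ∑ b, ∑ i, ∑ a, star (ξ (i,a)) * (star (Φ (Bl l i) b a) * -(y (l,b))) :=
            sum_comm3 _
        _ = -∑ b, star (y (l, b)) * y (l, b) := by
            rw [← Finset.sum_neg_distrib]
            refine Finset.sum_congr rfl fun b _ => ?_
            rw [hystar l b, Finset.sum_mul, ← Finset.sum_neg_distrib]
            refine Finset.sum_congr rfl fun i _ => ?_
            rw [Finset.sum_mul, ← Finset.sum_neg_distrib]
            exact Finset.sum_congr rfl fun a _ => by ring
    -- E3
    have hE3 : ∀ l : Fin k, (∑ j : Fin k, T l (Fin.last k) j.castSucc)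
        = -∑ a, star (y (l, a)) * y (l, a) := by
      intro l
      calc ∑ j : Fin k, T l (Fin.last k) j.castSucc
          = ∑ j, ∑ a, ∑ b, star (-(y (l,a))) * (Φ (Bl l j) a b * ξ (j,b)) := by
            simp only [hTdef, hAlast, hAc, huc, hulast, conjTranspose_one, Matrix.one_mul]
        _ = ∑ a, ∑ j, ∑ b, star (-(y (l,a))) * (Φ (Bl l j) a b * ξ (j,b)) :=
            Finset.sum_comm
        _ = -∑ a, star (y (l, a)) * y (l, a) := by
            rw [← Finset.sum_neg_distrib]
            refine Finset.sum_congr rfl fun a _ => ?_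
            have : (∑ j, ∑ b, star (-(y (l,a))) * (Φ (Bl l j) a b * ξ (j,b)))
                = -(star (y (l,a)) * ∑ j, ∑ b, Φ (Bl l j) a b * ξ (j,b)) := by
              simp only [star_neg, neg_mul, Finset.mul_sum, Finset.sum_neg_distrib]
            rw [this, ← hy l a]
    -- E4
    have hE4 : ∀ l : Fin k, T l (Fin.last k) (Fin.last k)
        = ∑ a, star (y (l, a)) * y (l, a) := by
      intro l
      simp only [hTdef, hAlast, conjTranspose_one, Matrix.one_mul, hunital, hulast,
        Matrix.one_apply, ite_mul, one_mul, zero_mul, mul_ite, mul_zero]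
      rw [Finset.sum_congr rfl (fun a _ => Finset.sum_ite_eq (Finset.univ) a
        (fun b => star (-(y (l,a))) * -(y (l,b))))]
      simp
    -- total
    have hyy : star y ⬝ᵥ y = ∑ l, ∑ a, star (y (l, a)) * y (l, a) := by
      simp [dotProduct, Fintype.sum_prod_type]
    have htot : (∑ l, ∑ i, ∑ j, T l i j)
        = star ξ ⬝ᵥ (amp k (⇑Φ) (Xᴴ * X) *ᵥ ξ) - star y ⬝ᵥ y := by
      rw [Finset.sum_congr rfl (fun l _ => hsplit l)]
      rw [Finset.sum_add_distrib, Finset.sum_add_distrib, Finset.sum_add_distrib]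
      rw [Finset.sum_congr rfl (fun l _ => hE2 l),
        Finset.sum_congr rfl (fun l _ => hE3 l),
        Finset.sum_congr rfl (fun l _ => hE4 l)]
      rw [hE1, hyy]
      simp only [Finset.sum_neg_distrib]
      ring
    have key : 0 ≤ star ξ ⬝ᵥ (amp k (⇑Φ) (Xᴴ * X) *ᵥ ξ) - star y ⬝ᵥ y := by
      rw [← htot]
      refine Finset.sum_nonneg fun l _ => ?_
      rw [← hS l]
      exact hs l
    rw [Matrix.sub_mulVec, dotProduct_sub]
    have hBB : star ξ ⬝ᵥ ((Bᴴ * B) *ᵥ ξ) = star y ⬝ᵥ y := by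
      rw [← Matrix.mulVec_mulVec, Matrix.dotProduct_mulVec, ← Matrix.star_mulVec, ← hydef]
    rw [hBB]
    exact key
end
end

section
/- Let d ≥ 2, let 1 ≤ k ≤ d, and let a be a real number with a < d. Define R_a : M_d(ℂ) → M_d(ℂ) by R_a(X) = (1/(d−a))·(Tr(X)·I_d − a·X). Then R_a is k-positive if and only if a ≤ 1/k. -/
open scoped ComplexOrder
open Matrix

noncomputable section

open Complex Finset

local notation "conj'" => starRingEnd ℂ

lemma normSq_sum_le (k : ℕ) (c : Fin k → ℂ) :
    Complex.normSq (∑ q, c q) ≤ k * ∑ q, Complex.normSq (c q) := by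
  have h1 : ‖∑ q, c q‖ ≤ ∑ q, ‖c q‖ := by
    simpa using norm_sum_le Finset.univ c
  have h2 : (∑ q, ‖c q‖)^2 ≤ (k:ℝ) * ∑ q, ‖c q‖ ^ 2 := by
    simpa using sq_sum_le_card_mul_sum_sq (s := Finset.univ) (f := fun q => ‖c q‖)
  have h3 : Complex.normSq (∑ q, c q) ≤ (∑ q, ‖c q‖)^2 := by
    rw [← Complex.sq_norm]
    exact pow_le_pow_left₀ (norm_nonneg _) h1 2
  calc Complex.normSq (∑ q, c q) ≤ (∑ q, ‖c q‖)^2 := h3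
    _ ≤ (k:ℝ) * ∑ q, ‖c q‖ ^ 2 := h2
    _ = k * ∑ q, Complex.normSq (c q) := by simp [Complex.sq_norm]

lemma cs_complex (d : ℕ) (x y : Fin d → ℂ) :
    Complex.normSq (∑ j, (starRingEnd ℂ) (x j) * y j)
      ≤ (∑ j, Complex.normSq (x j)) * (∑ j, Complex.normSq (y j)) := by
  set x' : EuclideanSpace ℂ (Fin d) := WithLp.toLp 2 x with hx'
  set y' : EuclideanSpace ℂ (Fin d) := WithLp.toLp 2 y with hy'
  have h := norm_inner_le_norm (𝕜 := ℂ) x' y'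
  have hi : (inner ℂ x' y' : ℂ) = ∑ j, (starRingEnd ℂ) (x j) * y j := by
    simp [PiLp.inner_apply, RCLike.inner_apply, mul_comm, hx', hy']
  have hx : ‖x'‖^2 = ∑ j, Complex.normSq (x j) := by
    rw [EuclideanSpace.norm_eq, Real.sq_sqrt (by positivity)]
    simp [Complex.sq_norm, hx']
  have hy : ‖y'‖^2 = ∑ j, Complex.normSq (y j) := by
    rw [EuclideanSpace.norm_eq, Real.sq_sqrt (by positivity)]
    simp [Complex.sq_norm, hy']
  calc Complex.normSq (∑ j, (starRingEnd ℂ) (x j) * y j)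
      = ‖(inner ℂ x' y' : ℂ)‖^2 := by rw [hi, ← Complex.sq_norm]
    _ ≤ (‖x'‖ * ‖y'‖)^2 := pow_le_pow_left₀ (norm_nonneg _) h 2
    _ = _ := by rw [mul_pow, hx, hy]


private lemma swap4 (k d : ℕ) (F : Fin k → Fin k → Fin d → Fin d → ℂ) :
    ∑ l : Fin d, ∑ i : Fin d, ∑ p : Fin k, ∑ q : Fin k, F p q l i
      = ∑ p : Fin k, ∑ q : Fin k, ∑ l : Fin d, ∑ i : Fin d, F p q l i := by
  calc ∑ l : Fin d, ∑ i : Fin d, ∑ p : Fin k, ∑ q : Fin k, F p q l i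
      = ∑ l : Fin d, ∑ p : Fin k, ∑ i : Fin d, ∑ q : Fin k, F p q l i :=
        Finset.sum_congr rfl fun l _ => Finset.sum_comm
    _ = ∑ p : Fin k, ∑ l : Fin d, ∑ i : Fin d, ∑ q : Fin k, F p q l i := Finset.sum_comm
    _ = ∑ p : Fin k, ∑ l : Fin d, ∑ q : Fin k, ∑ i : Fin d, F p q l i :=
        Finset.sum_congr rfl fun p _ => Finset.sum_congr rfl fun l _ => Finset.sum_comm
    _ = ∑ p : Fin k, ∑ q : Fin k, ∑ l : Fin d, ∑ i : Fin d, F p q l i :=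
        Finset.sum_congr rfl fun p _ => Finset.sum_comm

set_option maxRecDepth 8000 in
lemma keyIneq (k d : ℕ) (V U : Fin k → Fin d → ℂ) :
    Complex.normSq (∑ j : Fin d, ∑ q : Fin k, conj' (V q j) * U q j)
      ≤ k * ∑ l : Fin d, ∑ i : Fin d, Complex.normSq (∑ q : Fin k, conj' (V q l) * U q i) := by
  classical
  set Vm : Matrix (Fin k) (Fin d) ℂ := Matrix.of V with hVm
  set Um : Matrix (Fin k) (Fin d) ℂ := Matrix.of U with hUm
  have hG : (Vm * Vmᴴ).PosSemidef := Matrix.posSemidef_self_mul_conjTranspose Vm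
  have hH : (Vm * Vmᴴ).IsHermitian := hG.1
  set W : Matrix (Fin k) (Fin k) ℂ := (hH.eigenvectorUnitary : Matrix (Fin k) (Fin k) ℂ) with hW
  set lam : Fin k → ℝ := hH.eigenvalues with hlamdef
  have hlam : ∀ q, 0 ≤ lam q := hG.eigenvalues_nonneg
  have spec : Vm * Vmᴴ = W * Matrix.diagonal (RCLike.ofReal ∘ lam) * star W := hH.spectral_theorem
  have hWW : W * star W = 1 := (Matrix.mem_unitaryGroup_iff).mp hH.eigenvectorUnitary.2
  have hWW' : star W * W = 1 := (Matrix.mem_unitaryGroup_iff').mp hH.eigenvectorUnitary.2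
  set V' : Matrix (Fin k) (Fin d) ℂ := star W * Vm with hV'
  set U' : Matrix (Fin k) (Fin d) ℂ := star W * Um with hU'
  have claimA : V'ᴴ * U' = Vmᴴ * Um := by
    rw [hV', hU', Matrix.conjTranspose_mul, Matrix.mul_assoc, ← Matrix.mul_assoc (star W)ᴴ,
      Matrix.star_eq_conjTranspose, Matrix.conjTranspose_conjTranspose, ← Matrix.star_eq_conjTranspose W,
      hWW, Matrix.one_mul]
  have claimB : V' * V'ᴴ = Matrix.diagonal (fun p => (lam p : ℂ)) := by
    have h1 : V' * V'ᴴ = star W * (Vm * Vmᴴ) * W := by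
      rw [hV', Matrix.conjTranspose_mul, Matrix.star_eq_conjTranspose,
        Matrix.conjTranspose_conjTranspose, Matrix.mul_assoc, ← Matrix.mul_assoc Vm,
        ← Matrix.mul_assoc (Wᴴ), ← Matrix.mul_assoc (Wᴴ)]
    rw [h1, spec]
    calc star W * (W * Matrix.diagonal (RCLike.ofReal ∘ lam) * star W) * W
        = (star W * W) * Matrix.diagonal (RCLike.ofReal ∘ lam) * (star W * W) := by
          simp only [Matrix.mul_assoc]
      _ = Matrix.diagonal (fun p => (lam p : ℂ)) := by rw [hWW']; simp
  -- entrywise versions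
  have entryA : ∀ (l i : Fin d), (∑ q, conj' (V' q l) * U' q i) = ∑ q, conj' (V q l) * U q i := by
    intro l i
    have h := congrFun (congrFun claimA l) i
    simpa only [Matrix.mul_apply, Matrix.conjTranspose_apply, starRingEnd_apply, hVm, hUm,
      Matrix.of_apply] using h
  have entryB : ∀ (p q : Fin k), (∑ l, V' p l * conj' (V' q l)) = if p = q then (lam p : ℂ) else 0 := by
    intro p q
    have h := congrFun (congrFun claimB p) q
    simpa only [Matrix.mul_apply, Matrix.conjTranspose_apply, starRingEnd_apply,
      Matrix.diagonal_apply] using h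
  have rowNorm : ∀ q, (∑ j, Complex.normSq (V' q j)) = lam q := by
    intro q
    have h := entryB q q
    rw [if_pos rfl] at h
    have h2 : ((∑ j, Complex.normSq (V' q j) : ℝ) : ℂ) = ((lam q : ℝ) : ℂ) := by
      push_cast
      rw [← h]
      exact Finset.sum_congr rfl fun j _ => (Complex.mul_conj (V' q j)).symm
    exact_mod_cast h2
  set n : Fin k → ℝ := fun q => ∑ i, Complex.normSq (U' q i) with hn
  have RHSid : (∑ l, ∑ i, Complex.normSq (∑ q, conj' (V' q l) * U' q i)) = ∑ q, lam q * n q := by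
    have hC : ((∑ l, ∑ i, Complex.normSq (∑ q, conj' (V' q l) * U' q i) : ℝ) : ℂ)
        = ((∑ q, lam q * n q : ℝ) : ℂ) := by
      push_cast
      calc (∑ l, ∑ i, (Complex.normSq (∑ q, conj' (V' q l) * U' q i) : ℂ))
          = ∑ l, ∑ i, ∑ p, ∑ q, (V' p l * conj' (V' q l)) * (conj' (U' p i) * U' q i) := by
            refine Finset.sum_congr rfl fun l _ => Finset.sum_congr rfl fun i _ => ?_
            rw [Complex.normSq_eq_conj_mul_self, map_sum, Finset.sum_mul_sum]
            refine Finset.sum_congr rfl fun p _ => Finset.sum_congr rfl fun q _ => ?_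
            simp only [_root_.map_mul, Complex.conj_conj]
            ring
        _ = ∑ p, ∑ q, ∑ l, ∑ i, (V' p l * conj' (V' q l)) * (conj' (U' p i) * U' q i) := by
            exact swap4 k d (fun p q l i => (V' p l * conj' (V' q l)) * (conj' (U' p i) * U' q i))
        _ = ∑ p, ∑ q, (∑ l, V' p l * conj' (V' q l)) * (∑ i, conj' (U' p i) * U' q i) := by
            refine Finset.sum_congr rfl fun p _ => Finset.sum_congr rfl fun q _ => ?_
            rw [Finset.sum_mul_sum]
        _ = ∑ p, (lam p : ℂ) * ∑ i, conj' (U' p i) * U' p i := by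
            refine Finset.sum_congr rfl fun p _ => ?_
            have hq : ∀ q : Fin k, (∑ l, V' p l * conj' (V' q l)) * (∑ i, conj' (U' p i) * U' q i)
                = (if p = q then (lam p : ℂ) else 0) * (∑ i, conj' (U' p i) * U' q i) :=
              fun q => by rw [entryB p q]
            rw [Finset.sum_congr rfl fun q _ => hq q]
            simp [Finset.sum_ite_eq, ite_mul]
        _ = ∑ q, ((lam q : ℂ)) * ((n q : ℝ) : ℂ) := by
            refine Finset.sum_congr rfl fun p _ => ?_
            have hnp : ((n p : ℝ) : ℂ) = ∑ i, conj' (U' p i) * U' p i := by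
              have : n p = ∑ i, Complex.normSq (U' p i) := rfl
              rw [this]
              push_cast
              exact Finset.sum_congr rfl fun i _ => Complex.normSq_eq_conj_mul_self
            rw [hnp]
    exact_mod_cast hC
  have cbound : ∀ q, Complex.normSq (∑ j, conj' (V' q j) * U' q j) ≤ lam q * n q := by
    intro q
    have h := cs_complex d (fun j => V' q j) (fun j => U' q j)
    rwa [rowNorm q] at h
  calc Complex.normSq (∑ j, ∑ q, conj' (V q j) * U q j)
      = Complex.normSq (∑ j, ∑ q, conj' (V' q j) * U' q j) := by
        rw [Finset.sum_congr rfl fun j _ => (entryA j j)]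
    _ = Complex.normSq (∑ q, ∑ j, conj' (V' q j) * U' q j) := by rw [Finset.sum_comm]
    _ ≤ k * ∑ q, Complex.normSq (∑ j, conj' (V' q j) * U' q j) :=
        normSq_sum_le k _
    _ ≤ k * ∑ q, lam q * n q := by
        refine mul_le_mul_of_nonneg_left (Finset.sum_le_sum fun q _ => cbound q) (by positivity)
    _ = k * ∑ l, ∑ i, Complex.normSq (∑ q, conj' (V' q l) * U' q i) := by rw [RHSid]
    _ = _ := by
        congr 1
        exact Finset.sum_congr rfl fun l _ => Finset.sum_congr rfl fun i _ => by rw [entryA l i]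

private lemma swap5 {A B C D E : Type*} [Fintype A] [Fintype B] [Fintype C] [Fintype D]
    [Fintype E] (g : A → B → C → D → E → ℂ) :
    ∑ p, ∑ i, ∑ q, ∑ m, ∑ α, g p i q m α = ∑ α, ∑ m, ∑ i, ∑ p, ∑ q, g p i q m α := by
  calc ∑ p, ∑ i, ∑ q, ∑ m, ∑ α, g p i q m α
      = ∑ p, ∑ i, ∑ q, ∑ α, ∑ m, g p i q m α :=
        Finset.sum_congr rfl fun p _ => Finset.sum_congr rfl fun i _ =>
          Finset.sum_congr rfl fun q _ => Finset.sum_comm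
    _ = ∑ p, ∑ i, ∑ α, ∑ q, ∑ m, g p i q m α :=
        Finset.sum_congr rfl fun p _ => Finset.sum_congr rfl fun i _ => Finset.sum_comm
    _ = ∑ p, ∑ α, ∑ i, ∑ q, ∑ m, g p i q m α :=
        Finset.sum_congr rfl fun p _ => Finset.sum_comm
    _ = ∑ α, ∑ p, ∑ i, ∑ q, ∑ m, g p i q m α := Finset.sum_comm
    _ = ∑ α, ∑ p, ∑ i, ∑ m, ∑ q, g p i q m α :=
        Finset.sum_congr rfl fun α _ => Finset.sum_congr rfl fun p _ =>
          Finset.sum_congr rfl fun i _ => Finset.sum_comm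
    _ = ∑ α, ∑ p, ∑ m, ∑ i, ∑ q, g p i q m α :=
        Finset.sum_congr rfl fun α _ => Finset.sum_congr rfl fun p _ => Finset.sum_comm
    _ = ∑ α, ∑ m, ∑ p, ∑ i, ∑ q, g p i q m α :=
        Finset.sum_congr rfl fun α _ => Finset.sum_comm
    _ = ∑ α, ∑ m, ∑ i, ∑ p, ∑ q, g p i q m α :=
        Finset.sum_congr rfl fun α _ => Finset.sum_congr rfl fun m _ => Finset.sum_comm

private lemma swap3 {A B C : Type*} [Fintype A] [Fintype B] [Fintype C]
    (g : A → B → C → ℂ) :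
    ∑ p, ∑ q, ∑ α, g p q α = ∑ α, ∑ p, ∑ q, g p q α := by
  calc ∑ p, ∑ q, ∑ α, g p q α
      = ∑ p, ∑ α, ∑ q, g p q α := Finset.sum_congr rfl fun p _ => Finset.sum_comm
    _ = ∑ α, ∑ p, ∑ q, g p q α := Finset.sum_comm

set_option maxRecDepth 8000 in
lemma qf_eq (k d : ℕ) (a : ℝ) (C : Matrix (Fin k × Fin d) (Fin k × Fin d) ℂ)
    (u : Fin k × Fin d → ℂ) :
    star u ⬝ᵥ (amp k (fun Y : Matrix (Fin d) (Fin d) ℂ =>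
          (1 / ((d : ℂ) - (a : ℂ))) •
            (Matrix.trace Y • (1 : Matrix (Fin d) (Fin d) ℂ) - (a : ℂ) • Y)) (Cᴴ * C)) *ᵥ u
    = (1 / ((d : ℂ) - (a : ℂ))) *
      ((∑ α, ∑ l, ∑ i, (Complex.normSq (∑ q, C α (q, l) * u (q, i)) : ℂ))
        - (a : ℂ) * ∑ α, (Complex.normSq (∑ j, ∑ q, C α (q, j) * u (q, j)) : ℂ)) := by
  classical
  set c : ℂ := 1 / ((d : ℂ) - (a : ℂ)) with hc
  have ampE : ∀ r s : Fin k × Fin d,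
      amp k (fun Y : Matrix (Fin d) (Fin d) ℂ =>
          c • (Matrix.trace Y • (1 : Matrix (Fin d) (Fin d) ℂ) - (a : ℂ) • Y)) (Cᴴ * C) r s
        = c * ((∑ m, (Cᴴ * C) (r.1, m) (s.1, m)) * (if r.2 = s.2 then 1 else 0))
          - c * ((a : ℂ) * (Cᴴ * C) r s) := by
    intro r s
    show (c • (Matrix.trace (Matrix.of fun i j => (Cᴴ * C) (r.1, i) (s.1, j)) •
        (1 : Matrix (Fin d) (Fin d) ℂ)
        - (a : ℂ) • Matrix.of fun i j => (Cᴴ * C) (r.1, i) (s.1, j))) r.2 s.2 = _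
    simp only [Matrix.smul_apply, Matrix.sub_apply, Matrix.trace, Matrix.diag, Matrix.of_apply,
      Matrix.one_apply, smul_eq_mul]
    rw [mul_sub]
  -- expand dot product
  have expand : star u ⬝ᵥ (amp k (fun Y : Matrix (Fin d) (Fin d) ℂ =>
      c • (Matrix.trace Y • (1 : Matrix (Fin d) (Fin d) ℂ) - (a : ℂ) • Y)) (Cᴴ * C)) *ᵥ u
      = c * (∑ r, ∑ s, star (u r) * ((∑ m, (Cᴴ * C) (r.1, m) (s.1, m))
              * (if r.2 = s.2 then 1 else 0) * u s))
        - c * ((a:ℂ) * ∑ r, ∑ s, star (u r) * ((Cᴴ * C) r s * u s)) := by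
    rw [dotProduct]
    simp only [Matrix.mulVec, dotProduct, Pi.star_apply]
    rw [Finset.mul_sum, Finset.mul_sum, Finset.mul_sum, ← Finset.sum_sub_distrib]
    refine Finset.sum_congr rfl fun r _ => ?_
    rw [Finset.mul_sum, Finset.mul_sum, Finset.mul_sum, Finset.mul_sum, ← Finset.sum_sub_distrib]
    refine Finset.sum_congr rfl fun s _ => ?_
    rw [ampE r s]
    ring
  rw [expand]
  have S2eq : (∑ r, ∑ s, star (u r) * ((Cᴴ * C) r s * u s))
      = ∑ α, (Complex.normSq (∑ j, ∑ q, C α (q, j) * u (q, j)) : ℂ) := by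
    have step1 : ∀ r s : Fin k × Fin d, star (u r) * ((Cᴴ * C) r s * u s)
        = ∑ α, (star (C α r) * star (u r)) * (C α s * u s) := by
      intro r s
      rw [Matrix.mul_apply]
      rw [Finset.sum_mul, Finset.mul_sum]
      refine Finset.sum_congr rfl fun α _ => ?_
      rw [Matrix.conjTranspose_apply]
      ring
    calc (∑ r, ∑ s, star (u r) * ((Cᴴ * C) r s * u s))
        = ∑ r, ∑ s, ∑ α, (star (C α r) * star (u r)) * (C α s * u s) :=
          Finset.sum_congr rfl fun r _ => Finset.sum_congr rfl fun s _ => step1 r s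
      _ = ∑ α, ∑ r, ∑ s, (star (C α r) * star (u r)) * (C α s * u s) := swap3 _
      _ = ∑ α, (∑ r, star (C α r) * star (u r)) * (∑ s, C α s * u s) := by
          refine Finset.sum_congr rfl fun α _ => ?_
          rw [Finset.sum_mul_sum]
      _ = ∑ α, (Complex.normSq (∑ j, ∑ q, C α (q, j) * u (q, j)) : ℂ) := by
          refine Finset.sum_congr rfl fun α _ => ?_
          have h1 : (∑ r : Fin k × Fin d, C α r * u r) = ∑ j, ∑ q, C α (q, j) * u (q, j) := by
            rw [Fintype.sum_prod_type, Finset.sum_comm]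
          have h2 : (∑ r : Fin k × Fin d, star (C α r) * star (u r))
              = (starRingEnd ℂ) (∑ j, ∑ q, C α (q, j) * u (q, j)) := by
            rw [← h1, map_sum]
            exact Finset.sum_congr rfl fun r _ => by
              rw [starRingEnd_apply, star_mul']
          rw [h2, h1, Complex.normSq_eq_conj_mul_self]
  have S1eq : (∑ r, ∑ s, star (u r) * ((∑ m, (Cᴴ * C) (r.1, m) (s.1, m))
        * (if r.2 = s.2 then 1 else 0) * u s))
      = ∑ α, ∑ l, ∑ i, (Complex.normSq (∑ q, C α (q, l) * u (q, i)) : ℂ) := by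
    calc (∑ r, ∑ s, star (u r) * ((∑ m, (Cᴴ * C) (r.1, m) (s.1, m))
          * (if r.2 = s.2 then 1 else 0) * u s))
        = ∑ p, ∑ i, ∑ q, ∑ j, star (u (p, i)) * ((∑ m, (Cᴴ * C) (p, m) (q, m))
            * (if i = j then 1 else 0) * u (q, j)) := by
          rw [Fintype.sum_prod_type]
          refine Finset.sum_congr rfl fun p _ => ?_
          refine Finset.sum_congr rfl fun i _ => ?_
          rw [Fintype.sum_prod_type]
      _ = ∑ p, ∑ i, ∑ q, star (u (p, i)) * ((∑ m, (Cᴴ * C) (p, m) (q, m)) * u (q, i)) := by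
          refine Finset.sum_congr rfl fun p _ => Finset.sum_congr rfl fun i _ =>
            Finset.sum_congr rfl fun q _ => ?_
          simp only [mul_ite, ite_mul, mul_one, one_mul, mul_zero, zero_mul, Finset.sum_ite_eq,
            Finset.mem_univ, if_true]
      _ = ∑ p, ∑ i, ∑ q, ∑ m, ∑ α, (star (C α (p, m)) * star (u (p, i))) * (C α (q, m) * u (q, i)) := by
          refine Finset.sum_congr rfl fun p _ => Finset.sum_congr rfl fun i _ =>
            Finset.sum_congr rfl fun q _ => ?_
          rw [Finset.sum_mul, Finset.mul_sum]
          refine Finset.sum_congr rfl fun m _ => ?_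
          rw [Matrix.mul_apply, Finset.sum_mul, Finset.mul_sum]
          refine Finset.sum_congr rfl fun α _ => ?_
          rw [Matrix.conjTranspose_apply]
          ring
      _ = ∑ α, ∑ m, ∑ i, ∑ p, ∑ q, (star (C α (p, m)) * star (u (p, i))) * (C α (q, m) * u (q, i)) :=
          swap5 _
      _ = ∑ α, ∑ l, ∑ i, (Complex.normSq (∑ q, C α (q, l) * u (q, i)) : ℂ) := by
          refine Finset.sum_congr rfl fun α _ => Finset.sum_congr rfl fun l _ =>
            Finset.sum_congr rfl fun i _ => ?_
          rw [← Finset.sum_mul_sum]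
          have h2 : (∑ p, star (C α (p, l)) * star (u (p, i)))
              = (starRingEnd ℂ) (∑ q, C α (q, l) * u (q, i)) := by
            rw [map_sum]
            exact Finset.sum_congr rfl fun r _ => by rw [starRingEnd_apply, star_mul']
          rw [h2, Complex.normSq_eq_conj_mul_self]
  rw [S1eq, S2eq]
  ring

set_option maxRecDepth 8000 in
lemma amp_herm (k d : ℕ) (a : ℝ) (X : Matrix (Fin k × Fin d) (Fin k × Fin d) ℂ)
    (hX : X.IsHermitian) :
    (amp k (fun Y : Matrix (Fin d) (Fin d) ℂ =>
      (1 / ((d : ℂ) - (a : ℂ))) •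
        (Matrix.trace Y • (1 : Matrix (Fin d) (Fin d) ℂ) - (a : ℂ) • Y)) X).IsHermitian := by
  classical
  set c : ℂ := 1 / ((d : ℂ) - (a : ℂ)) with hc
  have ampE : ∀ r s : Fin k × Fin d,
      amp k (fun Y : Matrix (Fin d) (Fin d) ℂ =>
          c • (Matrix.trace Y • (1 : Matrix (Fin d) (Fin d) ℂ) - (a : ℂ) • Y)) X r s
        = c * ((∑ m, X (r.1, m) (s.1, m)) * (if r.2 = s.2 then 1 else 0))
          - c * ((a : ℂ) * X (r.1, r.2) (s.1, s.2)) := by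
    intro r s
    show (c • (Matrix.trace (Matrix.of fun i j => X (r.1, i) (s.1, j)) •
        (1 : Matrix (Fin d) (Fin d) ℂ)
        - (a : ℂ) • Matrix.of fun i j => X (r.1, i) (s.1, j))) r.2 s.2 = _
    simp only [Matrix.smul_apply, Matrix.sub_apply, Matrix.trace, Matrix.diag, Matrix.of_apply,
      Matrix.one_apply, smul_eq_mul]
    rw [mul_sub]
  have hstarc : star c = c := by
    rw [hc]
    simp [Complex.star_def, map_sub, Complex.conj_ofReal]
  refine Matrix.ext fun r s => ?_
  rw [Matrix.conjTranspose_apply, ampE, ampE]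
  have h2 : star (∑ m, X (s.1, m) (r.1, m)) = ∑ m, X (r.1, m) (s.1, m) := by
    rw [star_sum]
    exact Finset.sum_congr rfl fun m _ => hX.apply _ _
  have h3 : star (if s.2 = r.2 then (1:ℂ) else 0) = if r.2 = s.2 then (1:ℂ) else 0 := by
    by_cases hh : s.2 = r.2
    · simp [hh]
    · rw [if_neg hh, if_neg (fun hh' => hh hh'.symm), star_zero]
  have h4 : star ((a:ℂ)) = (a:ℂ) := Complex.conj_ofReal a
  simp only [star_sub, star_mul', hstarc, h2, h3, h4, hX.apply]

theorem stmt14 (d k : ℕ) (hd : 2 ≤ d) (hk1 : 1 ≤ k) (hkd : k ≤ d)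
    (a : ℝ) (ha : a < (d : ℝ)) :
    (∀ X : Matrix (Fin k × Fin d) (Fin k × Fin d) ℂ, X.PosSemidef →
        (amp k (fun Y : Matrix (Fin d) (Fin d) ℂ =>
          (1 / ((d : ℂ) - (a : ℂ))) •
            (Matrix.trace Y • (1 : Matrix (Fin d) (Fin d) ℂ) - (a : ℂ) • Y)) X).PosSemidef)
      ↔ a ≤ 1 / (k : ℝ) := by
  classical
  have hda : (0:ℝ) < (d:ℝ) - a := by linarith
  have hkR : (1:ℝ) ≤ (k:ℝ) := by exact_mod_cast hk1
  have hkpos : (0:ℝ) < (k:ℝ) := by linarith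
  constructor
  · -- necessity
    intro h
    set w : Fin k × Fin d → ℂ := fun s => if s.2 = Fin.castLE hkd s.1 then 1 else 0 with hw
    set r₀ : Fin k × Fin d := (⟨0, hk1⟩, ⟨0, by omega⟩) with hr₀
    set B : Matrix (Fin k × Fin d) (Fin k × Fin d) ℂ :=
      Matrix.of (fun r s => (if r = r₀ then 1 else 0) * star (w s)) with hB
    have hpsd := Matrix.posSemidef_conjTranspose_mul_self B
    have h2 := (h _ hpsd).dotProduct_mulVec_nonneg w
    rw [qf_eq] at h2
    set N : Fin d → ℂ := fun l => ∑ q : Fin k, if l = Fin.castLE hkd q then 1 else 0 with hN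
    have hns : ∀ (P : Prop) [Decidable P], Complex.normSq (if P then 1 else 0) = if P then 1 else 0 := by
      intro P _; split_ifs <;> simp
    have ht : ∀ (α : Fin k × Fin d) (l i : Fin d),
        (∑ q, B α (q, l) * w (q, i))
          = (if α = r₀ then 1 else 0) * ((if i = l then 1 else 0) * N l) := by
      intro α l i
      have hq : ∀ q : Fin k, B α (q, l) * w (q, i)
          = (if α = r₀ then 1 else 0) * ((if i = l then 1 else 0) *
              (if l = Fin.castLE hkd q then 1 else 0)) := by
        intro q
        rw [hB]
        simp only [Matrix.of_apply, hw]
        by_cases h1 : l = Fin.castLE hkd q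
        · subst h1
          simp [eq_comm]
        · rw [if_neg h1]
          simp
      rw [Finset.sum_congr rfl fun q _ => hq q, ← Finset.mul_sum, ← Finset.mul_sum]
    have hNval : ∀ l : Fin d, N l = if (l : ℕ) < k then 1 else 0 := by
      intro l
      show (∑ q : Fin k, if l = Fin.castLE hkd q then (1:ℂ) else 0) = _
      by_cases hl : (l : ℕ) < k
      · rw [if_pos hl, Finset.sum_eq_single (⟨(l : ℕ), hl⟩ : Fin k)]
        · simp [Fin.ext_iff]
        · intro q _ hq
          rw [if_neg]
          intro hcontra
          exact hq (Fin.ext (congrArg Fin.val hcontra).symm)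
        · intro habs; exact absurd (Finset.mem_univ _) habs
      · rw [if_neg hl, Finset.sum_eq_zero]
        intro q _
        rw [if_neg]
        intro hcontra
        exact hl (by rw [hcontra]; exact q.isLt)
    have hNsum : (∑ l, N l) = (k : ℂ) := by
      show (∑ l, ∑ q : Fin k, if l = Fin.castLE hkd q then (1:ℂ) else 0) = _
      rw [Finset.sum_comm]
      simp
    have hNre : ∀ l, Complex.normSq (N l) = (N l).re := by
      intro l
      rw [hNval l]
      split_ifs <;> simp
    have R1 : (∑ α : Fin k × Fin d, ∑ l, ∑ i,
        Complex.normSq (∑ q, B α (q, l) * w (q, i))) = (k : ℝ) := by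
      calc (∑ α : Fin k × Fin d, ∑ l, ∑ i, Complex.normSq (∑ q, B α (q, l) * w (q, i)))
          = ∑ α : Fin k × Fin d, ∑ l, ∑ i, (if α = r₀ then (1:ℝ) else 0) *
              ((if i = l then (1:ℝ) else 0) * Complex.normSq (N l)) := by
            refine Finset.sum_congr rfl fun α _ => Finset.sum_congr rfl fun l _ =>
              Finset.sum_congr rfl fun i _ => ?_
            rw [ht α l i, Complex.normSq_mul, Complex.normSq_mul, hns, hns]
        _ = ∑ l, Complex.normSq (N l) := by
            rw [Finset.sum_comm]
            simp [ite_mul, zero_mul, one_mul, Finset.sum_ite_eq', Finset.mem_univ]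
        _ = (∑ l, N l).re := by
            rw [Complex.re_sum]
            exact Finset.sum_congr rfl fun l _ => hNre l
        _ = (k : ℝ) := by rw [hNsum]; simp
    have R2 : (∑ α : Fin k × Fin d,
        Complex.normSq (∑ j, ∑ q, B α (q, j) * w (q, j))) = (k : ℝ)^2 := by
      have hrow : ∀ α : Fin k × Fin d, (∑ j, ∑ q, B α (q, j) * w (q, j))
          = (if α = r₀ then 1 else 0) * (k : ℂ) := by
        intro α
        calc (∑ j, ∑ q, B α (q, j) * w (q, j))
            = ∑ j, (if α = r₀ then 1 else 0) * N j := by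
              refine Finset.sum_congr rfl fun j _ => ?_
              rw [ht α j j, if_pos rfl, one_mul]
          _ = (if α = r₀ then 1 else 0) * (k : ℂ) := by rw [← Finset.mul_sum, hNsum]
      calc (∑ α : Fin k × Fin d, Complex.normSq (∑ j, ∑ q, B α (q, j) * w (q, j)))
          = ∑ α : Fin k × Fin d, (if α = r₀ then (1:ℝ) else 0) * Complex.normSq ((k:ℂ)) := by
            refine Finset.sum_congr rfl fun α _ => ?_
            rw [hrow α, Complex.normSq_mul, hns]
        _ = Complex.normSq ((k:ℂ)) := by
            simp [ite_mul, zero_mul, one_mul, Finset.sum_ite_eq', Finset.mem_univ]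
        _ = (k : ℝ)^2 := by
            rw [Complex.normSq_natCast]; ring
    have e1 : (∑ α : Fin k × Fin d, ∑ l, ∑ i,
        (Complex.normSq (∑ q, B α (q, l) * w (q, i)) : ℂ)) = ((k : ℝ) : ℂ) := by
      rw [← R1]; push_cast; ring
    have e2 : (∑ α : Fin k × Fin d,
        (Complex.normSq (∑ j, ∑ q, B α (q, j) * w (q, j)) : ℂ)) = (((k : ℝ)^2 : ℝ) : ℂ) := by
      rw [← R2]; push_cast; ring
    rw [e1, e2] at h2
    have hcast : (1 / ((d : ℂ) - (a : ℂ))) * (((k : ℝ) : ℂ) - (a : ℂ) * (((k : ℝ)^2 : ℝ) : ℂ))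
        = ((1 / ((d : ℝ) - a) * ((k : ℝ) - a * (k : ℝ)^2) : ℝ) : ℂ) := by
      push_cast; ring
    rw [hcast] at h2
    have hreal : (0:ℝ) ≤ 1 / ((d : ℝ) - a) * ((k : ℝ) - a * (k : ℝ)^2) :=
      Complex.zero_le_real.mp h2
    have hinv : (0:ℝ) < 1 / ((d : ℝ) - a) := by positivity
    have h4 : (0:ℝ) ≤ (k : ℝ) - a * (k : ℝ)^2 := by nlinarith
    rw [le_div_iff₀ hkpos]
    nlinarith
  · -- sufficiency
    intro ha' X hX
    obtain ⟨B, rfl⟩ : ∃ B : Matrix (Fin k × Fin d) (Fin k × Fin d) ℂ, X = Bᴴ * B := by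
      open scoped MatrixOrder in
      obtain ⟨B, hB, -, hBX⟩ := CFC.exists_sqrt_of_isSelfAdjoint_of_quasispectrumRestricts
        hX.isHermitian (QuasispectrumRestricts.nnreal_of_nonneg hX.nonneg)
      refine ⟨B, ?_⟩
      rw [← hBX]
      conv_rhs => rw [← Matrix.star_eq_conjTranspose, hB.star_eq]
    refine Matrix.PosSemidef.of_dotProduct_mulVec_nonneg (amp_herm k d a _ hX.1) fun u => ?_
    rw [qf_eq]
    set T1 : ℝ := ∑ α : Fin k × Fin d, ∑ l, ∑ i, Complex.normSq (∑ q, B α (q, l) * u (q, i))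
      with hT1
    set T2 : ℝ := ∑ α : Fin k × Fin d, Complex.normSq (∑ j, ∑ q, B α (q, j) * u (q, j)) with hT2
    have hrw : (1 / ((d : ℂ) - (a : ℂ))) *
        ((∑ α : Fin k × Fin d, ∑ l, ∑ i, (Complex.normSq (∑ q, B α (q, l) * u (q, i)) : ℂ))
          - (a : ℂ) * ∑ α : Fin k × Fin d,
              (Complex.normSq (∑ j, ∑ q, B α (q, j) * u (q, j)) : ℂ))
        = ((1 / ((d : ℝ) - a) * (T1 - a * T2) : ℝ) : ℂ) := by
      rw [hT1, hT2]; push_cast; ring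
    rw [hrw, Complex.zero_le_real]
    have hT2le : T2 ≤ (k : ℝ) * T1 := by
      rw [hT1, hT2, Finset.mul_sum]
      refine Finset.sum_le_sum fun α _ => ?_
      have hk := keyIneq k d (fun q l => star (B α (q, l))) (fun q i => u (q, i))
      simp only [starRingEnd_apply, star_star] at hk
      exact hk
    have hT1n : (0:ℝ) ≤ T1 := by
      rw [hT1]
      refine Finset.sum_nonneg fun α _ => Finset.sum_nonneg fun l _ =>
        Finset.sum_nonneg fun i _ => Complex.normSq_nonneg _
    have hT2n : (0:ℝ) ≤ T2 := by
      rw [hT2]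
      exact Finset.sum_nonneg fun α _ => Complex.normSq_nonneg _
    have haT2 : a * T2 ≤ T1 := by
      rcases le_or_gt a 0 with h0 | h0
      · exact (mul_nonpos_of_nonpos_of_nonneg h0 hT2n).trans hT1n
      · have hak : a * (k : ℝ) ≤ 1 := by
          rw [le_div_iff₀ hkpos] at ha'
          exact ha'
        calc a * T2 ≤ a * ((k : ℝ) * T1) := mul_le_mul_of_nonneg_left hT2le h0.le
          _ = (a * (k : ℝ)) * T1 := by ring
          _ ≤ 1 * T1 := mul_le_mul_of_nonneg_right hak hT1n
          _ = T1 := one_mul T1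
    have : (0:ℝ) ≤ T1 - a * T2 := by linarith
    exact mul_nonneg (by positivity) this
end
end

section
/- Let d ≥ 1, k ≥ 1, and let Φ : M_d(ℂ) → M_d(ℂ) be a k-positive, unital, trace-preserving linear map satisfying Δ_k(Φ_k(X)*Φ_k(X)) ≤ Δ_k(X*X) for all X ∈ M_k(M_d(ℂ)). Let a be a real number with 0 ≤ a ≤ d/(k·d + 1). Then for every X ∈ M_k(M_d(ℂ)) with Δ_k(X) = 0, the matrix (d−a)·d·Δ_k(X*X) − a(d−a)·Φ_k(X*X) − a²·Φ_k(X)*·Φ_k(X) is positive semidefinite. -/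
open scoped ComplexOrder
open scoped Kronecker
open Matrix

noncomputable section

variable {d k : ℕ}

/-- partial trace over the second factor -/
def ptr (B : Matrix (Fin k × Fin d) (Fin k × Fin d) ℂ) : Matrix (Fin k) (Fin k) ℂ :=
  Matrix.of fun i j => ∑ t, B (i, t) (j, t)

lemma amp_kron (Φ : Matrix (Fin d) (Fin d) ℂ →ₗ[ℂ] Matrix (Fin d) (Fin d) ℂ)
    (M : Matrix (Fin k) (Fin k) ℂ) (W : Matrix (Fin d) (Fin d) ℂ) :
    amp k (⇑Φ) (M ⊗ₖ W) = M ⊗ₖ (Φ W) := by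
  ext p q
  show Φ (Matrix.of fun i j => (M ⊗ₖ W) (p.1, i) (q.1, j)) p.2 q.2 = (M ⊗ₖ (Φ W)) p q
  have h : (Matrix.of fun i j => (M ⊗ₖ W) (p.1, i) (q.1, j)) = M p.1 q.1 • W := by
    ext i j; simp [Matrix.kroneckerMap_apply, smul_eq_mul]
  rw [h, Φ.map_smul]
  simp [Matrix.kroneckerMap_apply, smul_eq_mul]

lemma amp_sum {ι : Type*} (s : Finset ι) (Φ : Matrix (Fin d) (Fin d) ℂ →ₗ[ℂ] Matrix (Fin d) (Fin d) ℂ)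
    (f : ι → Matrix (Fin k × Fin d) (Fin k × Fin d) ℂ) :
    amp k (⇑Φ) (∑ m ∈ s, f m) = ∑ m ∈ s, amp k (⇑Φ) (f m) := by
  ext p q
  show Φ (Matrix.of fun i j => (∑ m ∈ s, f m) (p.1, i) (q.1, j)) p.2 q.2 = _
  have h : (Matrix.of fun i j => (∑ m ∈ s, f m) (p.1, i) (q.1, j))
      = ∑ m ∈ s, (Matrix.of fun i j => f m (p.1, i) (q.1, j)) := by
    ext i j; simp [Matrix.sum_apply]
  rw [h, map_sum]
  simp only [Matrix.sum_apply, amp, Matrix.of_apply]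

lemma amp_smul (Φ : Matrix (Fin d) (Fin d) ℂ →ₗ[ℂ] Matrix (Fin d) (Fin d) ℂ)
    (c : ℂ) (X : Matrix (Fin k × Fin d) (Fin k × Fin d) ℂ) :
    amp k (⇑Φ) (c • X) = c • amp k (⇑Φ) X := by
  ext p q
  show Φ (Matrix.of fun i j => (c • X) (p.1, i) (q.1, j)) p.2 q.2 = _
  have h : (Matrix.of fun i j => (c • X) (p.1, i) (q.1, j))
      = c • (Matrix.of fun i j => X (p.1, i) (q.1, j)) := by
    ext i j; simp
  rw [h, Φ.map_smul]
  simp [amp]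

lemma amp_sub (Φ : Matrix (Fin d) (Fin d) ℂ →ₗ[ℂ] Matrix (Fin d) (Fin d) ℂ)
    (X Y : Matrix (Fin k × Fin d) (Fin k × Fin d) ℂ) :
    amp k (⇑Φ) (X - Y) = amp k (⇑Φ) X - amp k (⇑Φ) Y := by
  ext p q
  show Φ (Matrix.of fun i j => (X - Y) (p.1, i) (q.1, j)) p.2 q.2 = _
  have h : (Matrix.of fun i j => (X - Y) (p.1, i) (q.1, j))
      = (Matrix.of fun i j => X (p.1, i) (q.1, j)) - (Matrix.of fun i j => Y (p.1, i) (q.1, j)) := by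
    ext i j; simp
  rw [h, Φ.map_sub]
  simp [amp]

lemma block_decomp (X : Matrix (Fin k × Fin d) (Fin k × Fin d) ℂ) :
    X = ∑ r : Fin k, ∑ u : Fin k,
      (Matrix.single r u (1:ℂ)) ⊗ₖ (Matrix.of fun i j => X (r, i) (u, j)) := by
  ext p q
  simp only [Matrix.sum_apply, Matrix.kroneckerMap_apply, Matrix.single,
    Matrix.of_apply, ite_mul, one_mul, zero_mul]
  rw [Finset.sum_comm]
  rw [Finset.sum_eq_single q.1]
  · rw [Finset.sum_eq_single p.1]
    · simp
    · intro b _ hb; simp [hb]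
    · simp
  · intro b _ hb; apply Finset.sum_eq_zero; intro r _; simp [hb]
  · simp

lemma amp_one (Φ : Matrix (Fin d) (Fin d) ℂ →ₗ[ℂ] Matrix (Fin d) (Fin d) ℂ)
    (hunital : Φ 1 = 1) : amp k (⇑Φ) (1 : Matrix (Fin k × Fin d) (Fin k × Fin d) ℂ) = 1 := by
  have h1 : (1 : Matrix (Fin k × Fin d) (Fin k × Fin d) ℂ)
      = (1 : Matrix (Fin k) (Fin k) ℂ) ⊗ₖ (1 : Matrix (Fin d) (Fin d) ℂ) := by
    rw [Matrix.one_kronecker_one]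
  rw [h1, amp_kron, hunital, Matrix.one_kronecker_one]

lemma amp_id (X : Matrix (Fin k × Fin d) (Fin k × Fin d) ℂ) :
    amp k (⇑(LinearMap.id (R := ℂ) (M := Matrix (Fin d) (Fin d) ℂ))) X = X := by
  ext p q
  show (Matrix.of fun i j => X (p.1, i) (q.1, j)) p.2 q.2 = X p q
  simp

lemma amp_conj (Φ : Matrix (Fin d) (Fin d) ℂ →ₗ[ℂ] Matrix (Fin d) (Fin d) ℂ)
    (M N : Matrix (Fin k) (Fin k) ℂ) (Z : Matrix (Fin k × Fin d) (Fin k × Fin d) ℂ) :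
    amp k (⇑Φ) ((M ⊗ₖ (1 : Matrix (Fin d) (Fin d) ℂ)) * Z * (N ⊗ₖ 1))
      = (M ⊗ₖ (1 : Matrix (Fin d) (Fin d) ℂ)) * amp k (⇑Φ) Z * (N ⊗ₖ 1) := by
  have key : ∀ (r u : Fin k) (B : Matrix (Fin d) (Fin d) ℂ),
      (M ⊗ₖ (1 : Matrix (Fin d) (Fin d) ℂ)) * ((Matrix.single r u (1:ℂ)) ⊗ₖ B) * (N ⊗ₖ 1)
        = (M * Matrix.single r u (1:ℂ) * N) ⊗ₖ B := by
    intro r u B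
    rw [← Matrix.mul_kronecker_mul, ← Matrix.mul_kronecker_mul, one_mul, mul_one]
  have e1 : (M ⊗ₖ (1 : Matrix (Fin d) (Fin d) ℂ)) * Z * (N ⊗ₖ 1)
      = ∑ r : Fin k, ∑ u : Fin k, (M * Matrix.single r u (1:ℂ) * N)
          ⊗ₖ (Matrix.of fun i j => Z (r, i) (u, j)) := by
    conv_lhs => rw [block_decomp Z]
    simp only [Finset.mul_sum, Finset.sum_mul]
    exact Finset.sum_congr rfl fun r _ => Finset.sum_congr rfl fun u _ => key r u _
  have e2 : amp k (⇑Φ) Z = ∑ r : Fin k, ∑ u : Fin k,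
      (Matrix.single r u (1:ℂ)) ⊗ₖ Φ (Matrix.of fun i j => Z (r, i) (u, j)) := by
    conv_lhs => rw [block_decomp Z]
    rw [amp_sum]
    exact Finset.sum_congr rfl fun r _ => by
      rw [amp_sum]
      exact Finset.sum_congr rfl fun u _ => amp_kron Φ _ _
  rw [e1, amp_sum, e2]
  simp only [Finset.mul_sum, Finset.sum_mul]
  refine Finset.sum_congr rfl fun r _ => ?_
  rw [amp_sum]
  refine Finset.sum_congr rfl fun u _ => ?_
  rw [amp_kron, key]

lemma delta_amp (B : Matrix (Fin k × Fin d) (Fin k × Fin d) ℂ) :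
    amp k (Delta d) B = (d:ℂ)⁻¹ • ((ptr B) ⊗ₖ (1 : Matrix (Fin d) (Fin d) ℂ)) := by
  ext p q
  show Delta d (Matrix.of fun i j => B (p.1, i) (q.1, j)) p.2 q.2 = _
  simp only [Delta, Matrix.trace, Matrix.diag, Matrix.of_apply, Matrix.smul_apply,
    Matrix.kroneckerMap_apply, ptr, Matrix.one_apply, smul_eq_mul, div_eq_mul_inv,
    mul_ite, mul_one, mul_zero]
  split_ifs <;> ring

lemma psd_add {A B : Matrix (Fin k × Fin d) (Fin k × Fin d) ℂ}
    (hA : A.PosSemidef) (hB : B.PosSemidef) : (A + B).PosSemidef := by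
  refine Matrix.PosSemidef.of_dotProduct_mulVec_nonneg (hA.1.add hB.1) fun x => ?_
  rw [Matrix.add_mulVec, dotProduct_add]
  exact add_nonneg (hA.dotProduct_mulVec_nonneg x) (hB.dotProduct_mulVec_nonneg x)

lemma psd_smul_s17 {A : Matrix (Fin k × Fin d) (Fin k × Fin d) ℂ} {c : ℝ}
    (hc : 0 ≤ c) (hA : A.PosSemidef) : ((c:ℂ) • A).PosSemidef := by
  refine Matrix.PosSemidef.of_dotProduct_mulVec_nonneg ?_ ?_
  · unfold Matrix.IsHermitian
    rw [Matrix.conjTranspose_smul, hA.1.eq]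
    congr 1
    simp
  · intro x
    rw [Matrix.smul_mulVec, dotProduct_smul]
    exact mul_nonneg (Complex.zero_le_real.2 hc) (hA.dotProduct_mulVec_nonneg x)

lemma psd_sum {ι : Type*} (s : Finset ι) (f : ι → Matrix (Fin k × Fin d) (Fin k × Fin d) ℂ)
    (h : ∀ m ∈ s, (f m).PosSemidef) : (∑ m ∈ s, f m).PosSemidef := by
  classical
  induction s using Finset.induction with
  | empty => simpa using Matrix.PosSemidef.zero
  | insert _ _ hns ih =>
    rename_i i t
    rw [Finset.sum_insert hns]
    exact psd_add (h i (t.mem_insert_self i)) (ih fun m hm => h m (Finset.mem_insert_of_mem hm))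

lemma psd_of_forall_eps {M : Matrix (Fin k × Fin d) (Fin k × Fin d) ℂ}
    (h : ∀ ε : ℝ, 0 < ε → (M + (ε:ℂ) • 1).PosSemidef) : M.PosSemidef := by
  refine Matrix.PosSemidef.of_dotProduct_mulVec_nonneg ?_ ?_
  · have h1 := (h 1 one_pos).1
    have : ((M + ((1:ℝ):ℂ) • 1) - ((1:ℝ):ℂ) • 1).IsHermitian := by
      refine h1.sub ?_
      unfold Matrix.IsHermitian
      rw [Matrix.conjTranspose_smul, Matrix.conjTranspose_one]
      congr 1
      simp
    simpa using this
  · intro x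
    set q := dotProduct (star x) (M *ᵥ x) with hq
    set N := dotProduct (star x) x with hN
    have hN0 : 0 ≤ N := dotProduct_star_self_nonneg x
    have key : ∀ ε : ℝ, 0 < ε → 0 ≤ q + (ε:ℂ) * N := by
      intro ε hε
      have := (h ε hε).dotProduct_mulVec_nonneg x
      rw [Matrix.add_mulVec, dotProduct_add, Matrix.smul_mulVec,
        Matrix.one_mulVec, dotProduct_smul] at this
      simpa using this
    have hNre : 0 ≤ N.re := (Complex.le_def.1 hN0).1
    have hNim : N.im = 0 := ((Complex.le_def.1 hN0).2).symm
    have him : q.im = 0 := by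
      have := key 1 one_pos
      have h2 := (Complex.le_def.1 this).2
      simp [Complex.add_im, Complex.mul_im, hNim] at h2
      linarith
    have hre : 0 ≤ q.re := by
      by_contra hc
      push_neg at hc
      rcases eq_or_lt_of_le hNre with hN1 | hN1
      · have := key 1 one_pos
        have h2 := (Complex.le_def.1 this).1
        simp [Complex.add_re, Complex.mul_re, ← hN1, hNim] at h2
        linarith
      · have hε : 0 < -q.re / (2 * N.re) := div_pos (by linarith) (by linarith)
        have := (Complex.le_def.1 (key _ hε)).1
        simp only [Complex.add_re, Complex.mul_re, Complex.ofReal_re, Complex.ofReal_im,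
          hNim, mul_zero, zero_mul, sub_zero, Complex.zero_re] at this
        have hne : N.re ≠ 0 := ne_of_gt hN1
        have heq : -q.re / (2 * N.re) * N.re = -q.re / 2 := by field_simp
        rw [heq] at this
        linarith
    rw [Complex.le_def]
    constructor
    · simpa using hre
    · simp [him]

lemma dot_conj (s w : (Fin k × Fin d) → ℂ) :
    dotProduct (star w) s = starRingEnd ℂ (dotProduct (star s) w) := by
  unfold dotProduct
  rw [map_sum]
  refine Finset.sum_congr rfl fun p _ => ?_
  simp only [Pi.star_apply, RCLike.star_def, RingHom.map_mul, Complex.conj_conj]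
  ring

lemma cauchy_schwarz_dot (s w : (Fin k × Fin d) → ℂ) :
    Complex.normSq (dotProduct (star s) w)
      ≤ (dotProduct (star s) s).re * (dotProduct (star w) w).re := by
  have h := inner_mul_inner_self_le (𝕜 := ℂ)
    ((WithLp.equiv 2 ((Fin k × Fin d) → ℂ)).symm s) ((WithLp.equiv 2 ((Fin k × Fin d) → ℂ)).symm w)
  simp only [WithLp.equiv_symm_apply, EuclideanSpace.inner_toLp_toLp] at h
  rw [dotProduct_comm w, dotProduct_comm s, dotProduct_comm s, dotProduct_comm w] at h
  rw [dot_conj s w, RCLike.norm_conj] at h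
  simp only [RCLike.re_to_complex] at h
  rw [Complex.normSq_eq_norm_sq, sq]
  exact h

lemma psd_kI_sub_vv (s : (Fin k × Fin d) → ℂ) (κ : ℝ)
    (hκ : (dotProduct (star s) s).re ≤ κ) :
    ((κ:ℂ) • (1 : Matrix (Fin k × Fin d) (Fin k × Fin d) ℂ)
      - Matrix.vecMulVec s (star s)).PosSemidef := by
  refine Matrix.PosSemidef.of_dotProduct_mulVec_nonneg ?_ ?_
  · unfold Matrix.IsHermitian
    rw [Matrix.conjTranspose_sub, Matrix.conjTranspose_smul, Matrix.conjTranspose_one]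
    congr 1
    · congr 1; simp
    · ext p q
      simp only [Matrix.conjTranspose_apply, Matrix.vecMulVec_apply, Pi.star_apply, star_mul',
        star_star]
      ring
  · intro w
    have hvv : (Matrix.vecMulVec s (star s)) *ᵥ w
        = (dotProduct (star s) w) • s := by
      ext p
      simp only [Matrix.mulVec, dotProduct, Matrix.vecMulVec_apply, Pi.star_apply,
        Pi.smul_apply, smul_eq_mul, Finset.sum_mul]
      exact Finset.sum_congr rfl fun x _ => by ring
    rw [Matrix.sub_mulVec, dotProduct_sub, Matrix.smul_mulVec,
      Matrix.one_mulVec, dotProduct_smul, hvv, dotProduct_smul]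
    set T := dotProduct (star s) w with hT
    set N := dotProduct (star w) w with hN
    rw [dot_conj s w, ← hT]
    have hN0 : 0 ≤ N := dotProduct_star_self_nonneg w
    have hNre : 0 ≤ N.re := (Complex.le_def.1 hN0).1
    have hNim : N.im = 0 := ((Complex.le_def.1 hN0).2).symm
    have hNr : N = ((N.re : ℝ) : ℂ) := Complex.ext rfl (by simpa using hNim)
    have hTT : T • starRingEnd ℂ T = ((Complex.normSq T : ℝ) : ℂ) := by
      rw [smul_eq_mul, Complex.mul_conj]
    rw [hTT, hNr, smul_eq_mul, ← Complex.ofReal_mul, ← Complex.ofReal_sub]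
    rw [Complex.zero_le_real]
    have hcs := cauchy_schwarz_dot s w
    have : Complex.normSq T ≤ κ * N.re :=
      le_trans hcs (mul_le_mul_of_nonneg_right hκ hNre)
    linarith

lemma kron_conjT (M : Matrix (Fin k) (Fin k) ℂ) (W : Matrix (Fin d) (Fin d) ℂ) :
    (M ⊗ₖ W)ᴴ = Mᴴ ⊗ₖ Wᴴ := by
  ext p q
  simp [Matrix.conjTranspose_apply, Matrix.kroneckerMap_apply, star_mul', mul_comm]

lemma mul_vv_mul (A : Matrix (Fin k × Fin d) (Fin k × Fin d) ℂ) (s : (Fin k × Fin d) → ℂ) :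
    A * Matrix.vecMulVec s (star s) * Aᴴ
      = Matrix.vecMulVec (A *ᵥ s) (star (A *ᵥ s)) := by
  ext p q
  simp only [Matrix.mul_apply, Matrix.vecMulVec_apply, Matrix.conjTranspose_apply,
    Pi.star_apply, Matrix.mulVec, dotProduct, star_sum, star_mul', star_star]
  rw [Finset.sum_mul_sum]
  simp only [Finset.sum_mul]
  rw [Finset.sum_comm]
  exact Finset.sum_congr rfl fun x _ => Finset.sum_congr rfl fun y _ => by ring

lemma ptr_sum {ι : Type*} (s : Finset ι) (f : ι → Matrix (Fin k × Fin d) (Fin k × Fin d) ℂ) :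
    ptr (∑ m ∈ s, f m) = ∑ m ∈ s, ptr (f m) := by
  ext i j
  simp only [ptr, Matrix.of_apply, Matrix.sum_apply]
  rw [Finset.sum_comm]

lemma sum_kron {ι : Type*} (s : Finset ι) (f : ι → Matrix (Fin k) (Fin k) ℂ) :
    ((∑ m ∈ s, f m) ⊗ₖ (1 : Matrix (Fin d) (Fin d) ℂ)) = ∑ m ∈ s, (f m ⊗ₖ 1) := by
  ext p q
  simp only [Matrix.kroneckerMap_apply, Matrix.sum_apply]
  rw [Finset.sum_mul]

lemma rankone (hk : 1 ≤ k)
    (Φ : Matrix (Fin d) (Fin d) ℂ →ₗ[ℂ] Matrix (Fin d) (Fin d) ℂ)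
    (hkpos : ∀ X : Matrix (Fin k × Fin d) (Fin k × Fin d) ℂ,
      X.PosSemidef → (amp k (⇑Φ) X).PosSemidef)
    (hunital : Φ 1 = 1) (c : (Fin k × Fin d) → ℂ) :
    ((k:ℂ) • ((ptr (Matrix.vecMulVec c (star c))) ⊗ₖ (1 : Matrix (Fin d) (Fin d) ℂ))
      - amp k (⇑Φ) (Matrix.vecMulVec c (star c))).PosSemidef := by
  set Chat : Matrix (Fin k) (Fin d) ℂ := Matrix.of (fun i t => c (i, t)) with hChat
  set G : Matrix (Fin k) (Fin k) ℂ := Chat * Chatᴴ with hGdef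
  have hG : G.PosSemidef := Matrix.posSemidef_self_mul_conjTranspose Chat
  have hptr : ptr (Matrix.vecMulVec c (star c)) = G := by
    ext i j
    simp [ptr, Matrix.vecMulVec_apply, Matrix.mul_apply, Matrix.conjTranspose_apply, hChat,
      hGdef]
  rw [hptr]
  apply psd_of_forall_eps
  intro ε' hε'
  have hkR : (0:ℝ) < k := by exact_mod_cast hk
  set ε : ℝ := ε' / k with hεdef
  have hε : 0 < ε := div_pos hε' hkR
  have hH : G.IsHermitian := hG.1
  set V : Matrix (Fin k) (Fin k) ℂ := (hH.eigenvectorUnitary : Matrix (Fin k) (Fin k) ℂ)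
    with hVdef
  set μ : Fin k → ℝ := hH.eigenvalues with hμ
  have hμ0 : ∀ α, 0 ≤ μ α := fun α => hG.eigenvalues_nonneg α
  have hVV : Vᴴ * V = 1 := by
    rw [← Matrix.star_eq_conjTranspose]
    exact Matrix.mem_unitaryGroup_iff'.mp hH.eigenvectorUnitary.2
  have hVV' : V * Vᴴ = 1 := by
    rw [← Matrix.star_eq_conjTranspose]
    exact Matrix.mem_unitaryGroup_iff.mp hH.eigenvectorUnitary.2
  have hNmul : ∀ f g : Fin k → ℂ,
      (V * Matrix.diagonal f * Vᴴ) * (V * Matrix.diagonal g * Vᴴ)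
        = V * Matrix.diagonal (f * g) * Vᴴ := by
    intro f g
    simp only [mul_assoc]
    rw [← mul_assoc Vᴴ V, hVV, one_mul, ← mul_assoc (Matrix.diagonal f),
      Matrix.diagonal_mul_diagonal]
    rfl
  have hNtrace : ∀ f : Fin k → ℂ,
      Matrix.trace (V * Matrix.diagonal f * Vᴴ) = ∑ α, f α := by
    intro f
    rw [Matrix.trace_mul_cycle, hVV, one_mul, Matrix.trace_diagonal]
  have hNherm : ∀ f : Fin k → ℝ,
      (V * Matrix.diagonal (fun α => ((f α : ℝ) : ℂ)) * Vᴴ)ᴴ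
        = V * Matrix.diagonal (fun α => ((f α : ℝ) : ℂ)) * Vᴴ := by
    intro f
    rw [Matrix.conjTranspose_mul, Matrix.conjTranspose_mul, Matrix.conjTranspose_conjTranspose,
      Matrix.diagonal_conjTranspose]
    have : star (fun α => ((f α : ℝ) : ℂ)) = fun α => ((f α : ℝ) : ℂ) := by
      funext α; simp [Pi.star_apply, Complex.conj_ofReal, RCLike.star_def]
    rw [this, mul_assoc]
  have hspec : G = V * Matrix.diagonal (fun α => ((μ α : ℝ) : ℂ)) * Vᴴ := by
    have h := hH.spectral_theorem
    rw [Unitary.conjStarAlgAut_apply, Matrix.star_eq_conjTranspose] at h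
    exact h
  set f : Fin k → ℝ := fun α => Real.sqrt (μ α + ε) with hf
  have hfpos : ∀ α, 0 < f α := fun α => Real.sqrt_pos.2 (by have := hμ0 α; linarith)
  set C : Matrix (Fin k) (Fin k) ℂ := V * Matrix.diagonal (fun α => ((f α : ℝ) : ℂ)) * Vᴴ
    with hC
  set Ci : Matrix (Fin k) (Fin k) ℂ := V * Matrix.diagonal (fun α => (((f α)⁻¹ : ℝ) : ℂ)) * Vᴴ
    with hCi
  have hCCi : C * Ci = 1 := by
    rw [hC, hCi, hNmul]
    have : (fun α => ((f α : ℝ) : ℂ)) * (fun α => (((f α)⁻¹ : ℝ) : ℂ)) = fun _ => 1 := by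
      funext α
      rw [Pi.mul_apply]
      have := (hfpos α).ne'
      push_cast
      field_simp
    rw [this, Matrix.diagonal_one, mul_one, hVV']
  have hCH : Cᴴ = C := hNherm f
  have hCiH : Ciᴴ = Ci := hNherm (fun α => (f α)⁻¹)
  have hCC : C * C = G + ((ε : ℝ) : ℂ) • 1 := by
    rw [hC, hNmul]
    have h1 : (fun α => ((f α : ℝ) : ℂ)) * (fun α => ((f α : ℝ) : ℂ))
        = fun α => ((μ α : ℝ) : ℂ) + ((ε : ℝ) : ℂ) := by
      funext α
      have h : f α * f α = μ α + ε := Real.mul_self_sqrt (by have := hμ0 α; linarith)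
      show ((f α : ℝ) : ℂ) * ((f α : ℝ) : ℂ) = _
      rw [← Complex.ofReal_mul, h, Complex.ofReal_add]
    rw [h1]
    have h2 : Matrix.diagonal (fun α => ((μ α : ℝ) : ℂ) + ((ε : ℝ) : ℂ))
        = Matrix.diagonal (fun α => ((μ α : ℝ) : ℂ)) + ((ε : ℝ) : ℂ) • 1 := by
      ext i j
      by_cases h : i = j <;>
        simp [Matrix.diagonal_apply, Matrix.one_apply, h]
    rw [h2, mul_add, add_mul, ← hspec]
    congr 1
    rw [mul_smul_comm, smul_mul_assoc, mul_one, hVV']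
  set Shat : Matrix (Fin k) (Fin d) ℂ := Ci * Chat with hShat
  set s : (Fin k × Fin d) → ℂ := fun p => Shat p.1 p.2 with hs
  have hCS : C * Shat = Chat := by rw [hShat, ← Matrix.mul_assoc, hCCi, Matrix.one_mul]
  have hCs : (C ⊗ₖ (1 : Matrix (Fin d) (Fin d) ℂ)) *ᵥ s = c := by
    ext p
    simp only [Matrix.mulVec, dotProduct]
    rw [Fintype.sum_prod_type]
    simp only [Matrix.kroneckerMap_apply, Matrix.one_apply, mul_ite, mul_one, mul_zero,
      ite_mul, zero_mul]
    simp only [Finset.sum_ite_eq, Finset.mem_univ, if_true]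
    have hsv : ∀ q1, s (q1, p.2) = Shat q1 p.2 := fun _ => rfl
    calc (∑ q1, C p.1 q1 * s (q1, p.2)) = ∑ q1, C p.1 q1 * Shat q1 p.2 := by
          exact Finset.sum_congr rfl fun q1 _ => by rw [hsv]
      _ = (C * Shat) p.1 p.2 := (Matrix.mul_apply).symm
      _ = Chat p.1 p.2 := by rw [hCS]
      _ = c p := by rw [hChat]; simp
  have hvvc : Matrix.vecMulVec c (star c)
      = (C ⊗ₖ (1 : Matrix (Fin d) (Fin d) ℂ)) * Matrix.vecMulVec s (star s)
        * (C ⊗ₖ (1 : Matrix (Fin d) (Fin d) ℂ))ᴴ := by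
    rw [mul_vv_mul, hCs]
  have htr : (dotProduct (star s) s).re ≤ (k : ℝ) := by
    have h1 : dotProduct (star s) s = Matrix.trace (Shat * Shatᴴ) := by
      simp only [Matrix.trace, Matrix.diag, Matrix.mul_apply, dotProduct,
        Matrix.conjTranspose_apply, Pi.star_apply, Fintype.sum_prod_type, hs]
      exact Finset.sum_congr rfl fun i _ => Finset.sum_congr rfl fun t _ => by ring
    have h2 : Shat * Shatᴴ = Ci * G * Ci := by
      rw [hShat, Matrix.conjTranspose_mul, hCiH, hGdef]
      simp only [Matrix.mul_assoc]
    have h3 : Ci * G * Ci = V * Matrix.diagonal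
        (fun α => ((μ α / (f α * f α) : ℝ) : ℂ)) * Vᴴ := by
      rw [hCi, hspec]
      rw [hNmul, hNmul]
      have harg : (((fun α => (((f α)⁻¹ : ℝ) : ℂ)) * fun α => ((μ α : ℝ) : ℂ))
            * fun α => (((f α)⁻¹ : ℝ) : ℂ))
          = fun α => ((μ α / (f α * f α) : ℝ) : ℂ) := by
        funext α
        simp only [Pi.mul_apply]
        have := (hfpos α).ne'
        push_cast
        field_simp
      rw [harg]
    rw [h1, h2, h3, hNtrace]
    have h4 : ∀ α, (((μ α / (f α * f α) : ℝ) : ℂ)).re = μ α / (μ α + ε) := by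
      intro α
      rw [Real.mul_self_sqrt (by have := hμ0 α; linarith)]
      exact Complex.ofReal_re _
    rw [Complex.re_sum]
    calc (∑ α, (((μ α / (f α * f α) : ℝ) : ℂ)).re) = ∑ α, μ α / (μ α + ε) := by
          exact Finset.sum_congr rfl fun α _ => h4 α
      _ ≤ ∑ _α : Fin k, (1:ℝ) := by
          refine Finset.sum_le_sum fun α _ => ?_
          rw [div_le_one (by have := hμ0 α; linarith)]
          linarith
      _ = (k:ℝ) := by simp
  have hs1 := psd_kI_sub_vv s k htr
  rw [Complex.ofReal_natCast] at hs1
  have hs2 := hkpos _ hs1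
  have hamp : amp k (⇑Φ) ((k:ℂ) • (1 : Matrix (Fin k × Fin d) (Fin k × Fin d) ℂ)
      - Matrix.vecMulVec s (star s))
      = (k:ℂ) • (1 : Matrix (Fin k × Fin d) (Fin k × Fin d) ℂ)
        - amp k (⇑Φ) (Matrix.vecMulVec s (star s)) := by
    rw [amp_sub, amp_smul, amp_one Φ hunital]
  rw [hamp] at hs2
  have hs3 := hs2.mul_mul_conjTranspose_same (C ⊗ₖ (1 : Matrix (Fin d) (Fin d) ℂ))
  have key : (C ⊗ₖ (1 : Matrix (Fin d) (Fin d) ℂ))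
        * ((k:ℂ) • (1 : Matrix (Fin k × Fin d) (Fin k × Fin d) ℂ)
            - amp k (⇑Φ) (Matrix.vecMulVec s (star s)))
        * (C ⊗ₖ (1 : Matrix (Fin d) (Fin d) ℂ))ᴴ
      = ((k:ℂ) • (G ⊗ₖ (1 : Matrix (Fin d) (Fin d) ℂ))
          - amp k (⇑Φ) (Matrix.vecMulVec c (star c))) + ((ε' : ℝ) : ℂ) • 1 := by
    rw [Matrix.mul_sub, Matrix.sub_mul]
    have hpart1 : (C ⊗ₖ (1 : Matrix (Fin d) (Fin d) ℂ))
          * ((k:ℂ) • (1 : Matrix (Fin k × Fin d) (Fin k × Fin d) ℂ))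
          * (C ⊗ₖ (1 : Matrix (Fin d) (Fin d) ℂ))ᴴ
        = (k:ℂ) • (G ⊗ₖ (1 : Matrix (Fin d) (Fin d) ℂ)) + ((ε' : ℝ) : ℂ) • 1 := by
      rw [mul_smul_comm, smul_mul_assoc, mul_one, kron_conjT, hCH, Matrix.conjTranspose_one]
      rw [← Matrix.mul_kronecker_mul, hCC, mul_one]
      have : ((G + ((ε : ℝ) : ℂ) • 1) ⊗ₖ (1 : Matrix (Fin d) (Fin d) ℂ))
          = G ⊗ₖ (1 : Matrix (Fin d) (Fin d) ℂ) + ((ε : ℝ) : ℂ) • 1 := by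
        ext p q
        simp only [Matrix.kroneckerMap_apply, Matrix.add_apply, Matrix.smul_apply,
          Matrix.one_apply, smul_eq_mul, Prod.ext_iff]
        by_cases h1 : p.1 = q.1 <;> by_cases h2 : p.2 = q.2 <;> simp [h1, h2] <;> ring
      rw [this, smul_add, smul_smul]
      congr 2
      rw [hεdef]
      push_cast
      field_simp
    have hpart2 : (C ⊗ₖ (1 : Matrix (Fin d) (Fin d) ℂ))
          * amp k (⇑Φ) (Matrix.vecMulVec s (star s))
          * (C ⊗ₖ (1 : Matrix (Fin d) (Fin d) ℂ))ᴴ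
        = amp k (⇑Φ) (Matrix.vecMulVec c (star c)) := by
      rw [kron_conjT, Matrix.conjTranspose_one, ← amp_conj Φ C Cᴴ]
      rw [hvvc, kron_conjT, Matrix.conjTranspose_one]
    rw [hpart1, hpart2]
    abel
  rw [key] at hs3
  exact hs3

lemma lemL (hk : 1 ≤ k)
    (Φ : Matrix (Fin d) (Fin d) ℂ →ₗ[ℂ] Matrix (Fin d) (Fin d) ℂ)
    (hkpos : ∀ X : Matrix (Fin k × Fin d) (Fin k × Fin d) ℂ,
      X.PosSemidef → (amp k (⇑Φ) X).PosSemidef)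
    (hunital : Φ 1 = 1) {B : Matrix (Fin k × Fin d) (Fin k × Fin d) ℂ}
    (hB : B.PosSemidef) :
    ((k:ℂ) • ((ptr B) ⊗ₖ (1 : Matrix (Fin d) (Fin d) ℂ)) - amp k (⇑Φ) B).PosSemidef := by
  obtain ⟨S, hB2⟩ : ∃ S : Matrix (Fin k × Fin d) (Fin k × Fin d) ℂ, B = Sᴴ * S := by
    open scoped MatrixOrder Matrix.Norms.L2Operator in
    exact CStarAlgebra.nonneg_iff_eq_star_mul_self.mp hB.nonneg
  have hdecomp : B = ∑ m : Fin k × Fin d,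
      Matrix.vecMulVec (fun p => Sᴴ p m) (star fun p => Sᴴ p m) := by
    ext p q
    rw [Matrix.sum_apply, hB2, Matrix.mul_apply]
    refine Finset.sum_congr rfl fun m _ => ?_
    simp [Matrix.vecMulVec_apply, Matrix.conjTranspose_apply, star_star]
  rw [hdecomp, ptr_sum, sum_kron, Finset.smul_sum, amp_sum, ← Finset.sum_sub_distrib]
  exact psd_sum _ _ fun m _ => rankone hk Φ hkpos hunital _
theorem stmt17 (d k : ℕ) (hd : 1 ≤ d) (hk : 1 ≤ k)
    (Φ : Matrix (Fin d) (Fin d) ℂ →ₗ[ℂ] Matrix (Fin d) (Fin d) ℂ)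
    (hkpos : ∀ X : Matrix (Fin k × Fin d) (Fin k × Fin d) ℂ,
      X.PosSemidef → (amp k (⇑Φ) X).PosSemidef)
    (hunital : Φ 1 = 1)
    (htp : ∀ X, Matrix.trace (Φ X) = Matrix.trace X)
    (hstar : ∀ X : Matrix (Fin k × Fin d) (Fin k × Fin d) ℂ,
      (amp k (Delta d) (Xᴴ * X) -
        amp k (Delta d) ((amp k (⇑Φ) X)ᴴ * amp k (⇑Φ) X)).PosSemidef)
    (a : ℝ) (ha0 : 0 ≤ a) (ha1 : a ≤ (d : ℝ) / ((k : ℝ) * (d : ℝ) + 1)) :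
    ∀ X : Matrix (Fin k × Fin d) (Fin k × Fin d) ℂ,
      amp k (Delta d) X = 0 →
      ((((d : ℂ) - (a : ℂ)) * (d : ℂ)) • amp k (Delta d) (Xᴴ * X)
        - ((a : ℂ) * ((d : ℂ) - (a : ℂ))) • amp k (⇑Φ) (Xᴴ * X)
        - ((a : ℂ) ^ 2) • ((amp k (⇑Φ) X)ᴴ * amp k (⇑Φ) X)).PosSemidef := by
  intro X _
  have hdR : (0:ℝ) < d := by exact_mod_cast hd
  have hkR : (0:ℝ) < k := by exact_mod_cast hk
  have hdC : (d:ℂ) ≠ 0 := by exact_mod_cast hdR.ne'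
  have hkC : (k:ℂ) ≠ 0 := by exact_mod_cast hkR.ne'
  set Y : Matrix (Fin k × Fin d) (Fin k × Fin d) ℂ := amp k (⇑Φ) X with hY
  have hBx : (Xᴴ * X).PosSemidef := Matrix.posSemidef_conjTranspose_mul_self X
  have hBy : (Yᴴ * Y).PosSemidef := Matrix.posSemidef_conjTranspose_mul_self Y
  have hP1 : ((k:ℂ) • ((ptr (Xᴴ * X)) ⊗ₖ (1 : Matrix (Fin d) (Fin d) ℂ))
      - amp k (⇑Φ) (Xᴴ * X)).PosSemidef := lemL hk Φ hkpos hunital hBx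
  have hidpos : ∀ Z : Matrix (Fin k × Fin d) (Fin k × Fin d) ℂ, Z.PosSemidef →
      (amp k (⇑(LinearMap.id (R := ℂ) (M := Matrix (Fin d) (Fin d) ℂ))) Z).PosSemidef :=
    fun Z hZ => by rwa [amp_id]
  have hP3 := lemL hk LinearMap.id hidpos rfl hBy
  rw [amp_id] at hP3
  have hP2 := hstar X
  rw [delta_amp, delta_amp] at hP2
  have hPhixx : (amp k (⇑Φ) (Xᴴ * X)).PosSemidef := hkpos _ hBx
  -- scalar facts
  have hkd1 : (0:ℝ) < (k:ℝ) * (d:ℝ) + 1 := by positivity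
  have hakd : a * ((k:ℝ) * (d:ℝ) + 1) ≤ (d:ℝ) := by
    rw [← le_div_iff₀ hkd1]; exact ha1
  have had : a ≤ (d:ℝ) := by nlinarith [mul_nonneg ha0 (by positivity : (0:ℝ) ≤ (k:ℝ)*(d:ℝ))]
  set c1 : ℝ := a * ((d:ℝ) - a) with hc1
  set c2 : ℝ := a^2 * ((k:ℝ) * (d:ℝ)) with hc2
  set c3 : ℝ := a^2 with hc3
  set c5 : ℝ := (d:ℝ) * ((d:ℝ) - a * ((k:ℝ) * (d:ℝ) + 1)) / ((k:ℝ) * (d:ℝ)) with hc5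
  have hc1n : 0 ≤ c1 := by nlinarith
  have hc2n : 0 ≤ c2 := by positivity
  have hc3n : 0 ≤ c3 := by positivity
  have hc5n : 0 ≤ c5 := by
    apply div_nonneg _ (by positivity)
    nlinarith
  set M1 : Matrix (Fin k × Fin d) (Fin k × Fin d) ℂ :=
    (k:ℂ) • ((ptr (Xᴴ * X)) ⊗ₖ (1 : Matrix (Fin d) (Fin d) ℂ)) - amp k (⇑Φ) (Xᴴ * X) with hM1
  set M2 : Matrix (Fin k × Fin d) (Fin k × Fin d) ℂ :=
    (d:ℂ)⁻¹ • ((ptr (Xᴴ * X)) ⊗ₖ (1 : Matrix (Fin d) (Fin d) ℂ))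
      - (d:ℂ)⁻¹ • ((ptr (Yᴴ * Y)) ⊗ₖ (1 : Matrix (Fin d) (Fin d) ℂ)) with hM2
  set M3 : Matrix (Fin k × Fin d) (Fin k × Fin d) ℂ :=
    (k:ℂ) • ((ptr (Yᴴ * Y)) ⊗ₖ (1 : Matrix (Fin d) (Fin d) ℂ)) - Yᴴ * Y with hM3
  have hkey : (((d : ℂ) - (a : ℂ)) * (d : ℂ)) • amp k (Delta d) (Xᴴ * X)
        - ((a : ℂ) * ((d : ℂ) - (a : ℂ))) • amp k (⇑Φ) (Xᴴ * X)
        - ((a : ℂ) ^ 2) • (Yᴴ * Y)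
      = (c1:ℂ) • M1 + (c2:ℂ) • M2 + (c3:ℂ) • M3
        + (c5:ℂ) • (M1 + amp k (⇑Φ) (Xᴴ * X)) := by
    rw [delta_amp, hM1, hM2, hM3, hc1, hc2, hc3, hc5]
    match_scalars <;> (push_cast; field_simp; try ring)
  rw [hkey]
  exact psd_add (psd_add (psd_add (psd_smul_s17 hc1n hP1) (psd_smul_s17 hc2n hP2))
    (psd_smul_s17 hc3n hP3)) (psd_smul_s17 hc5n (psd_add hP1 hPhixx))
end
end
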